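/- arXiv:2511.00521 — 7 statements merged into one kernel-verified Lean document; each statement's English description precedes it below -/
import Mathlib

section
/- Let C₁, …, C_N be i.i.d. random variables taking values in {1, …, K} with Pr(C_u = k) = p_k, and let C̃_k^(N) = #{u : C_u = k} be the count of category k. If p_a > p_b, then Pr(C̃_a^(N) ≤ C̃_b^(N)) ≤ exp(-N·(√p_a - √p_b)²). -/
open MeasureTheory ProbabilityTheory Finset

/-- Chernoff bound for comparing multinomial counts: if C₁,…,C_N are i.i.d. draws from
a K-category distribution with Pr(C_u = k) = p_k and p_a > p_b, then the probability
that the count of category a is at most the count of category b is at most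
exp(-N (√p_a - √p_b)²). -/
theorem stmt3 {Ω : Type*} [MeasurableSpace Ω] (P : Measure Ω) [IsProbabilityMeasure P]
    (K N : ℕ) (p : Fin K → ℝ) (hp : ∀ k, 0 ≤ p k) (hsum : ∑ k, p k = 1)
    (C : Fin N → Ω → Fin K) (hmeas : ∀ u, Measurable (C u))
    (hindep : iIndepFun C P)
    (hdist : ∀ (u : Fin N) (k : Fin K), P {ω : Ω | C u ω = k} = ENNReal.ofReal (p k))
    (a b : Fin K) (hab : a ≠ b) (h : p b < p a) :
    P {ω : Ω | (Finset.univ.filter (fun u => C u ω = a)).card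
        ≤ (Finset.univ.filter (fun u => C u ω = b)).card}
      ≤ ENNReal.ofReal
          (Real.exp (-(N : ℝ) * (Real.sqrt (p a) - Real.sqrt (p b)) ^ 2)) := by
  classical
  have hpa0 : 0 < p a := lt_of_le_of_lt (hp b) h
  have hpa1 : p a ≤ 1 := hsum ▸ Finset.single_le_sum (fun k _ => hp k) (mem_univ a)
  set D : ℝ := (Real.sqrt (p a) - Real.sqrt (p b)) ^ 2 with hD
  -- choose the Chernoff parameter l = exp t
  obtain ⟨l, hl1, hml⟩ : ∃ l : ℝ, 1 ≤ l ∧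
      1 + (l - 1) * p b + (l⁻¹ - 1) * p a ≤ Real.exp (-D) := by
    rcases eq_or_lt_of_le (hp b) with hb0 | hb0
    · -- p b = 0
      have hden : 0 < Real.exp (-p a) - 1 + p a := by
        have := Real.add_one_lt_exp (x := -p a) (by linarith)
        linarith
      have hex1 : Real.exp (-p a) ≤ 1 := by
        calc Real.exp (-p a) ≤ Real.exp 0 := Real.exp_le_exp.mpr (by linarith)
        _ = 1 := Real.exp_zero
      refine ⟨p a / (Real.exp (-p a) - 1 + p a), ?_, ?_⟩
      · rw [le_div_iff₀ hden]; linarith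
      · have hDa : D = p a := by
          rw [hD, ← hb0, Real.sqrt_zero, sub_zero, Real.sq_sqrt hpa0.le]
        have h1 : (p a / (Real.exp (-p a) - 1 + p a))⁻¹ * p a
            = Real.exp (-p a) - 1 + p a := by
          rw [inv_div]; field_simp
        rw [hDa, ← hb0]
        nlinarith [h1]
    · -- 0 < p b
      have hsb0 : 0 < Real.sqrt (p b) := Real.sqrt_pos.mpr hb0
      have hsa0 : 0 < Real.sqrt (p a) := Real.sqrt_pos.mpr hpa0
      have hpb : p b = Real.sqrt (p b) ^ 2 := (Real.sq_sqrt (hp b)).symm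
      have hpa : p a = Real.sqrt (p a) ^ 2 := (Real.sq_sqrt hpa0.le).symm
      refine ⟨Real.sqrt (p a) / Real.sqrt (p b), ?_, ?_⟩
      · rw [le_div_iff₀ hsb0, one_mul]
        exact Real.sqrt_le_sqrt h.le
      · have key : ∀ x y : ℝ, 0 < x → 0 < y → x ^ 2 = p a → y ^ 2 = p b →
            1 + (x / y - 1) * p b + ((x / y)⁻¹ - 1) * p a = 1 - (x - y) ^ 2 := by
          intro x y hx hy hxa hyb
          rw [← hxa, ← hyb, inv_div]
          field_simp
          ring
        have hcalc := key (Real.sqrt (p a)) (Real.sqrt (p b)) hsa0 hsb0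
          (Real.sq_sqrt hpa0.le) (Real.sq_sqrt (hp b))
        rw [hcalc, hD]
        linarith [Real.add_one_le_exp (-D)]
  have hl0 : 0 < l := lt_of_lt_of_le one_pos hl1
  set t : ℝ := Real.log l with ht
  have hexpt : Real.exp t = l := Real.exp_log hl0
  have ht0 : 0 ≤ t := Real.log_nonneg hl1
  set f : Fin K → ℝ :=
    fun k => (if k = b then (1 : ℝ) else 0) - (if k = a then (1 : ℝ) else 0) with hf
  have hfmeas : Measurable f := measurable_of_countable f
  set X : Fin N → Ω → ℝ := fun u ω => f (C u ω) with hX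
  have hXmeas : ∀ u, Measurable (X u) := fun u => hfmeas.comp (hmeas u)
  have hXindep : iIndepFun X P :=
    hindep.comp (fun _ => f) (fun _ => hfmeas)
  have hXbd : ∀ u ω, |X u ω| ≤ 2 := by
    intro u ω
    simp only [hX, hf]
    split_ifs <;> norm_num
  have hint : ∀ u, Integrable (fun ω => Real.exp (t * X u ω)) P := by
    intro u
    refine Integrable.mono' (integrable_const (Real.exp (|t| * 2)))
      (((hXmeas u).const_mul t).exp).aestronglyMeasurable ?_
    filter_upwards with ω
    rw [Real.norm_eq_abs, Real.abs_exp]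
    apply Real.exp_le_exp.mpr
    calc t * X u ω ≤ |t * X u ω| := le_abs_self _
      _ = |t| * |X u ω| := abs_mul _ _
      _ ≤ |t| * 2 := by
          have := hXbd u ω
          have := abs_nonneg t
          nlinarith
  set m : ℝ := 1 + (l - 1) * p b + (l⁻¹ - 1) * p a with hm
  have hmgf : ∀ u, mgf (X u) P t = m := by
    intro u
    have hprob : IsProbabilityMeasure (P.map (C u)) :=
      Measure.isProbabilityMeasure_map (hmeas u).aemeasurable
    have hmap : ∀ k : Fin K, (P.map (C u)) {k} = ENNReal.ofReal (p k) := by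
      intro k
      rw [Measure.map_apply (hmeas u) (measurableSet_singleton k)]
      rw [show (C u) ⁻¹' {k} = {ω : Ω | C u ω = k} by ext ω; simp]
      exact hdist u k
    have hterm : ∀ k : Fin K, p k * Real.exp (t * f k)
        = p k + (if k = b then (l - 1) * p k else 0)
          + (if k = a then (l⁻¹ - 1) * p k else 0) := by
      intro k
      by_cases hkb : k = b <;> by_cases hka : k = a
      · exact absurd (hka.symm.trans hkb) hab
      · rw [show f k = 1 by simp [hf, hkb, hka, Ne.symm hab], if_pos hkb, if_neg hka, mul_one,
          hexpt]
        ring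
      · rw [show f k = -1 by simp [hf, hkb, hka, hab], if_neg hkb, if_pos hka,
          mul_neg_one, Real.exp_neg, hexpt]
        ring
      · rw [show f k = 0 by simp [hf, hkb, hka], if_neg hkb, if_neg hka, mul_zero,
          Real.exp_zero]
        ring
    calc mgf (X u) P t = ∫ ω, Real.exp (t * f (C u ω)) ∂P := rfl
      _ = ∫ k, Real.exp (t * f k) ∂(P.map (C u)) := by
          rw [integral_map (hmeas u).aemeasurable]
          exact ((hfmeas.const_mul t).exp).aestronglyMeasurable
      _ = ∑ k, ((P.map (C u)) {k}).toReal • Real.exp (t * f k) :=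
          integral_fintype .of_finite
      _ = ∑ k, p k * Real.exp (t * f k) := by
          refine Finset.sum_congr rfl fun k _ => ?_
          rw [hmap k, ENNReal.toReal_ofReal (hp k), smul_eq_mul]
      _ = m := by
          rw [Finset.sum_congr rfl fun k _ => hterm k]
          rw [Finset.sum_add_distrib, Finset.sum_add_distrib, hsum,
            Finset.sum_ite_eq' univ b, Finset.sum_ite_eq' univ a]
          simp [hm]
  have hm0 : 0 ≤ m := by
    rw [hm]
    have h1 : 0 ≤ l⁻¹ := inv_nonneg.mpr hl0.le
    have h2 : l⁻¹ ≤ 1 := inv_le_one_of_one_le₀ hl1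
    have h3 : 0 ≤ (l - 1) * p b := mul_nonneg (by linarith) (hp b)
    have h4 : (1 - l⁻¹) * p a ≤ 1 := mul_le_one₀ (by linarith) hpa0.le hpa1
    have h5 : (l⁻¹ - 1) * p a = -((1 - l⁻¹) * p a) := by ring
    nlinarith [h3, h4, h5, h1, h2]
  have hSeq : {ω : Ω | (Finset.univ.filter (fun u => C u ω = a)).card
        ≤ (Finset.univ.filter (fun u => C u ω = b)).card}
      = {ω : Ω | (0 : ℝ) ≤ (∑ u, X u) ω} := by
    ext ω
    have hsum' : (∑ u, X u) ω
        = ((Finset.univ.filter (fun u => C u ω = b)).card : ℝ)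
          - ((Finset.univ.filter (fun u => C u ω = a)).card : ℝ) := by
      simp [hX, hf, Finset.sum_sub_distrib, Finset.sum_boole]
    simp only [Set.mem_setOf_eq, hsum', sub_nonneg, Nat.cast_le]
  have hintsum : Integrable (fun ω => Real.exp (t * (∑ u, X u) ω)) P :=
    hXindep.integrable_exp_mul_sum hXmeas (fun u _ => hint u)
  have hchern := measure_ge_le_exp_mul_mgf (μ := P) (X := ∑ u, X u) 0 ht0 hintsum
  have hmgfsum : mgf (∑ u, X u) P t = m ^ N := by
    rw [hXindep.mgf_sum hXmeas Finset.univ]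
    simp [hmgf]
  rw [hSeq, ← ENNReal.ofReal_toReal (measure_ne_top P _)]
  apply ENNReal.ofReal_le_ofReal
  refine hchern.trans ?_
  rw [mul_zero, Real.exp_zero, one_mul, hmgfsum]
  calc m ^ N ≤ Real.exp (-D) ^ N := pow_le_pow_left₀ hm0 hml N
    _ = Real.exp (-(N : ℝ) * D) := by
        rw [show -(N : ℝ) * D = (N : ℝ) * (-D) by ring, Real.exp_nat_mul]
end

section
/- Let C₁, …, C_N be i.i.d. with values in {1, …, K}, Pr(C_u = k) = p_k, and counts C̃_k^(N). If p_1 > p_k for all k = 2, …, K, then Pr(C̃_1^(N) > C̃_k^(N) for all k ≥ 2) ≥ 1 - Σ_{k=2}^K exp(-N·(√p_1 - √p_k)²). -/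
open MeasureTheory ProbabilityTheory Finset

lemma aux_chernoff_t (pk p1 : ℝ) (hk : 0 ≤ pk) (hlt : pk < p1) :
    ∃ t : ℝ, 0 ≤ t ∧ pk * Real.exp t + p1 * Real.exp (-t) + (1 - pk - p1)
      ≤ Real.exp (-(Real.sqrt p1 - Real.sqrt pk) ^ 2) := by
  have h1 : 0 < p1 := lt_of_le_of_lt hk hlt
  rcases eq_or_lt_of_le hk with h0 | h0
  · set δ : ℝ := Real.exp (-p1) - 1 + p1 with hδdef
    have hδ : 0 < δ := by
      have := Real.add_one_lt_exp (x := -p1) (neg_ne_zero.mpr h1.ne')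
      simp only [hδdef]; linarith
    have hδlt : δ < p1 := by
      have : Real.exp (-p1) < 1 := Real.exp_lt_one_iff.mpr (by linarith)
      simp only [hδdef]; linarith
    refine ⟨Real.log (p1 / δ), Real.log_nonneg ((one_le_div hδ).mpr hδlt.le), ?_⟩
    have hexp : Real.exp (-Real.log (p1 / δ)) = δ / p1 := by
      rw [Real.exp_neg, Real.exp_log (by positivity)]
      field_simp
    have hsq : (Real.sqrt p1 - Real.sqrt pk) ^ 2 = p1 := by
      rw [← h0, Real.sqrt_zero, sub_zero, Real.sq_sqrt h1.le]
    have hmul : p1 * (δ / p1) = δ := by field_simp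
    rw [hexp, hsq, hmul, ← h0]
    simp only [hδdef]; ring_nf; exact le_refl _
  · set a := Real.sqrt p1 with ha
    set b := Real.sqrt pk with hb
    have hb0 : 0 < b := Real.sqrt_pos.mpr h0
    have ha0 : 0 < a := Real.sqrt_pos.mpr h1
    have hba : b < a := Real.sqrt_lt_sqrt hk hlt
    refine ⟨Real.log (a / b), Real.log_nonneg ((one_le_div hb0).mpr hba.le), ?_⟩
    have h1' : Real.exp (Real.log (a / b)) = a / b := Real.exp_log (by positivity)
    have h2' : Real.exp (-Real.log (a / b)) = b / a := by
      rw [Real.exp_neg, h1']; field_simp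
    rw [h1', h2']
    have hpk : pk = b ^ 2 := (Real.sq_sqrt h0.le).symm
    have hp1 : p1 = a ^ 2 := (Real.sq_sqrt h1.le).symm
    have hLHS : pk * (a / b) + p1 * (b / a) + (1 - pk - p1) = 1 - (a - b) ^ 2 := by
      rw [hpk, hp1]; field_simp; ring
    rw [hLHS]
    have := Real.add_one_le_exp (-(a - b) ^ 2)
    linarith

set_option maxRecDepth 8000 in
/-- Lower bound for majority voting: if category k₁ is the unique mode of the sampling
distribution, then the probability that its count strictly exceeds every other count is
at least 1 - Σ_{k ≠ k₁} exp(-N (√p_{k₁} - √p_k)²). -/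
theorem stmt4 {Ω : Type*} [MeasurableSpace Ω] (P : Measure Ω) [IsProbabilityMeasure P]
    (K N : ℕ) (p : Fin K → ℝ) (hp : ∀ k, 0 ≤ p k) (hsum : ∑ k, p k = 1)
    (C : Fin N → Ω → Fin K) (hmeas : ∀ u, Measurable (C u))
    (hindep : iIndepFun C P)
    (hdist : ∀ (u : Fin N) (k : Fin K), P {ω : Ω | C u ω = k} = ENNReal.ofReal (p k))
    (k₁ : Fin K) (hmode : ∀ k : Fin K, k ≠ k₁ → p k < p k₁) :
    1 - ENNReal.ofReal (∑ k ∈ Finset.univ.erase k₁,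
          Real.exp (-(N : ℝ) * (Real.sqrt (p k₁) - Real.sqrt (p k)) ^ 2))
      ≤ P {ω : Ω | ∀ k : Fin K, k ≠ k₁ →
          (Finset.univ.filter (fun u => C u ω = k)).card
            < (Finset.univ.filter (fun u => C u ω = k₁)).card} := by
  classical
  set cnt : Fin K → Ω → ℕ := fun k ω => (Finset.univ.filter (fun u => C u ω = k)).card with hcnt
  have hcard : ∀ (k : Fin K) (ω : Ω),
      (cnt k ω : ℝ) = ∑ u : Fin N, (if C u ω = k then (1 : ℝ) else 0) := by
    intro k ω
    rw [show cnt k ω = (Finset.univ.filter (fun u => C u ω = k)).card from rfl,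
      Finset.card_filter]
    push_cast
    rfl
  have hcnt_meas : ∀ k, Measurable (cnt k) := by
    intro k
    have : cnt k = fun ω => ∑ u : Fin N, if C u ω = k then 1 else 0 := by
      funext ω
      exact Finset.card_filter _ _
    rw [this]
    exact Finset.measurable_sum _ fun u _ =>
      Measurable.ite ((hmeas u) (measurableSet_singleton k)) measurable_const measurable_const
  set E : Set Ω := {ω : Ω | ∀ k : Fin K, k ≠ k₁ → cnt k ω < cnt k₁ ω} with hE
  have hEmeas : MeasurableSet E := by
    have hEi : E = ⋂ k : Fin K, ⋂ _ : k ≠ k₁, {ω | cnt k ω < cnt k₁ ω} := by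
      ext ω; simp [hE]
    rw [hEi]
    exact MeasurableSet.iInter fun k => MeasurableSet.iInter fun _ =>
      measurableSet_lt (hcnt_meas k) (hcnt_meas k₁)
  -- key per-category bound
  have key : ∀ k : Fin K, k ≠ k₁ →
      P {ω | cnt k₁ ω ≤ cnt k ω}
        ≤ ENNReal.ofReal (Real.exp (-(N : ℝ) * (Real.sqrt (p k₁) - Real.sqrt (p k)) ^ 2)) := by
    intro k hk
    have hle2 : p k + p k₁ ≤ 1 := by
      have h := Finset.sum_le_sum_of_subset_of_nonneg
        (Finset.subset_univ ({k, k₁} : Finset (Fin K))) (fun j _ _ => hp j)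
      rwa [Finset.sum_pair hk, hsum] at h
    obtain ⟨t, ht0, htle⟩ := aux_chernoff_t (p k) (p k₁) (hp k) (hmode k hk)
    set f : Fin K → ℝ := fun j => (if j = k then (1 : ℝ) else 0) - (if j = k₁ then 1 else 0)
      with hf
    have hfmeas : Measurable f := measurable_of_finite f
    set X : Fin N → Ω → ℝ := fun u => f ∘ C u with hX
    have hXmeas : ∀ u, Measurable (X u) := fun u => hfmeas.comp (hmeas u)
    have hXindep : iIndepFun X P :=
      hindep.comp (fun _ => f) (fun _ => hfmeas)
    have hXbdd : ∀ u ω, |X u ω| ≤ 1 := by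
      intro u ω
      simp only [hX, hf, Function.comp]
      split_ifs <;> norm_num
    -- single mgf
    have hmgf1 : ∀ u, mgf (X u) P t
        = p k * Real.exp t + p k₁ * Real.exp (-t) + (1 - p k - p k₁) := by
      intro u
      have hmap : IsProbabilityMeasure (P.map (C u)) :=
        Measure.isProbabilityMeasure_map (hmeas u).aemeasurable
      have h1 : mgf (X u) P t = ∫ j, Real.exp (t * f j) ∂(P.map (C u)) := by
        rw [mgf, integral_map (hmeas u).aemeasurable
          ((measurable_of_finite (fun j => Real.exp (t * f j))).aestronglyMeasurable)]
        rfl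
      have h2 : ∫ j, Real.exp (t * f j) ∂(P.map (C u))
          = ∑ j : Fin K, ((P.map (C u)) {j}).toReal * Real.exp (t * f j) := by
        rw [integral_fintype (Integrable.of_finite)]
        simp [smul_eq_mul, Measure.real]
      have h3 : ∀ j : Fin K, ((P.map (C u)) {j}).toReal = p j := by
        intro j
        rw [Measure.map_apply (hmeas u) (measurableSet_singleton j)]
        have hpre : C u ⁻¹' {j} = {ω | C u ω = j} := rfl
        rw [hpre, hdist u j, ENNReal.toReal_ofReal (hp j)]
      rw [h1, h2]
      simp only [h3]
      have hsplit : ∀ j : Fin K, p j * Real.exp (t * f j)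
          = p j + p j * (Real.exp (t * f j) - 1) := by intro j; ring
      rw [Finset.sum_congr rfl fun j _ => hsplit j, Finset.sum_add_distrib, hsum]
      have hsupp : ∑ j : Fin K, p j * (Real.exp (t * f j) - 1)
          = ∑ j ∈ ({k, k₁} : Finset (Fin K)), p j * (Real.exp (t * f j) - 1) := by
        refine (Finset.sum_subset (Finset.subset_univ _) ?_).symm
        intro j _ hj
        simp only [Finset.mem_insert, Finset.mem_singleton, not_or] at hj
        simp [hf, hj.1, hj.2]
      rw [hsupp, Finset.sum_pair hk]
      have hfk : f k = 1 := by simp [hf, hk]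
      have hfk1 : f k₁ = -1 := by simp [hf, Ne.symm hk]
      rw [hfk, hfk1, mul_one, mul_neg_one]
      ring
    -- mgf of sum
    have hmgfS : mgf (∑ u, X u) P t
        = (p k * Real.exp t + p k₁ * Real.exp (-t) + (1 - p k - p k₁)) ^ N := by
      rw [hXindep.mgf_sum hXmeas]
      simp [hmgf1, Finset.prod_const, Finset.card_univ]
    have hMnonneg : 0 ≤ p k * Real.exp t + p k₁ * Real.exp (-t) + (1 - p k - p k₁) :=
      add_nonneg (add_nonneg (mul_nonneg (hp k) (Real.exp_pos t).le)
        (mul_nonneg (hp k₁) (Real.exp_pos _).le)) (by linarith)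
    have hpow : (p k * Real.exp t + p k₁ * Real.exp (-t) + (1 - p k - p k₁)) ^ N
        ≤ Real.exp (-(N : ℝ) * (Real.sqrt (p k₁) - Real.sqrt (p k)) ^ 2) := by
      calc (p k * Real.exp t + p k₁ * Real.exp (-t) + (1 - p k - p k₁)) ^ N
          ≤ (Real.exp (-(Real.sqrt (p k₁) - Real.sqrt (p k)) ^ 2)) ^ N :=
            pow_le_pow_left₀ hMnonneg htle N
        _ = Real.exp (-(N : ℝ) * (Real.sqrt (p k₁) - Real.sqrt (p k)) ^ 2) := by
            rw [← Real.exp_nat_mul]; congr 1; ring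
    -- integrability
    have hSmeas : Measurable (∑ u, X u) := by
      have : (∑ u, X u) = fun ω => ∑ u, X u ω := by
        funext ω; simp [Finset.sum_apply]
      rw [this]
      exact Finset.measurable_sum _ fun u _ => hXmeas u
    have hint : Integrable (fun ω => Real.exp (t * (∑ u, X u) ω)) P := by
      refine ⟨((hSmeas.const_mul t).exp).aestronglyMeasurable, ?_⟩
      refine HasFiniteIntegral.of_bounded (C := Real.exp (|t| * N)) (ae_of_all _ ?_)
      intro ω
      rw [Real.norm_eq_abs, abs_of_pos (Real.exp_pos _)]
      apply Real.exp_le_exp.mpr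
      calc t * (∑ u, X u) ω ≤ |t * (∑ u, X u) ω| := le_abs_self _
        _ = |t| * |(∑ u, X u) ω| := abs_mul _ _
        _ ≤ |t| * N := by
            apply mul_le_mul_of_nonneg_left _ (abs_nonneg t)
            simp only [Finset.sum_apply]
            calc |∑ u, X u ω| ≤ ∑ u, |X u ω| := Finset.abs_sum_le_sum_abs _ _
              _ ≤ ∑ _u : Fin N, (1 : ℝ) := Finset.sum_le_sum fun u _ => hXbdd u ω
              _ = N := by simp
    -- Chernoff bound
    have hch := measure_ge_le_exp_mul_mgf (μ := P) (X := ∑ u, X u) 0 ht0 hint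
    rw [mul_zero, Real.exp_zero, one_mul] at hch
    -- event identification
    have hevent : {ω | (0 : ℝ) ≤ (∑ u, X u) ω} = {ω | cnt k₁ ω ≤ cnt k ω} := by
      ext ω
      simp only [Set.mem_setOf_eq, Finset.sum_apply]
      have hsum' : ∑ u, X u ω = (cnt k ω : ℝ) - (cnt k₁ ω : ℝ) := by
        simp only [hX, hf, Function.comp]
        rw [Finset.sum_sub_distrib, hcard k ω, hcard k₁ ω]
      rw [hsum', sub_nonneg, Nat.cast_le]
    rw [hevent] at hch
    calc P {ω | cnt k₁ ω ≤ cnt k ω}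
        = ENNReal.ofReal ((P {ω | cnt k₁ ω ≤ cnt k ω}).toReal) :=
          (ENNReal.ofReal_toReal (measure_ne_top P _)).symm
      _ ≤ ENNReal.ofReal (Real.exp (-(N : ℝ) * (Real.sqrt (p k₁) - Real.sqrt (p k)) ^ 2)) := by
          apply ENNReal.ofReal_le_ofReal
          calc (P {ω | cnt k₁ ω ≤ cnt k ω}).toReal ≤ mgf (∑ u, X u) P t := hch
            _ ≤ _ := by rw [hmgfS]; exact hpow
  -- union bound
  have hcompl : Eᶜ ⊆ ⋃ k ∈ Finset.univ.erase k₁, {ω | cnt k₁ ω ≤ cnt k ω} := by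
    intro ω hω
    simp only [hE, Set.mem_compl_iff, Set.mem_setOf_eq] at hω
    push_neg at hω
    obtain ⟨k, hk, hle'⟩ := hω
    exact Set.mem_biUnion (Finset.mem_erase.mpr ⟨hk, Finset.mem_univ k⟩) hle'
  have hEc_le : P Eᶜ ≤ ENNReal.ofReal (∑ k ∈ Finset.univ.erase k₁,
      Real.exp (-(N : ℝ) * (Real.sqrt (p k₁) - Real.sqrt (p k)) ^ 2)) := by
    calc P Eᶜ ≤ P (⋃ k ∈ Finset.univ.erase k₁, {ω | cnt k₁ ω ≤ cnt k ω}) :=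
          measure_mono hcompl
      _ ≤ ∑ k ∈ Finset.univ.erase k₁, P {ω | cnt k₁ ω ≤ cnt k ω} :=
          measure_biUnion_finset_le _ _
      _ ≤ ∑ k ∈ Finset.univ.erase k₁,
            ENNReal.ofReal (Real.exp (-(N : ℝ) * (Real.sqrt (p k₁) - Real.sqrt (p k)) ^ 2)) :=
          Finset.sum_le_sum fun k hk => key k (Finset.mem_erase.mp hk).1
      _ = _ := (ENNReal.ofReal_sum_of_nonneg fun k _ => (Real.exp_pos _).le).symm
  have hPE : P E = 1 - P Eᶜ := by
    conv_lhs => rw [← compl_compl E]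
    exact prob_compl_eq_one_sub hEmeas.compl
  rw [hPE]
  exact tsub_le_tsub_left hEc_le 1
end

section
/- Let C₁, …, C_N be i.i.d. with values in {1, …, K} with Pr(C_u = k) = p_k, and counts C̃_k^(N). If p_k > p_1 for some k ∈ {2, …, K}, then Pr(C̃_1^(N) ≥ C̃_j^(N) for all j ≥ 2) ≤ exp(-N·(√p_k - √p_1)²). -/
open MeasureTheory ProbabilityTheory Finset

/-- Upper bound for majority voting: if some category k beats category k₁
(p_k > p_{k₁}), then the probability that the count of k₁ weakly dominates all other
counts is at most exp(-N (√p_k - √p_{k₁})²). -/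
theorem stmt5 {Ω : Type*} [MeasurableSpace Ω] (P : Measure Ω) [IsProbabilityMeasure P]
    (K N : ℕ) (p : Fin K → ℝ) (hp : ∀ k, 0 ≤ p k) (hsum : ∑ k, p k = 1)
    (C : Fin N → Ω → Fin K) (hmeas : ∀ u, Measurable (C u))
    (hindep : iIndepFun C P)
    (hdist : ∀ (u : Fin N) (k : Fin K), P {ω : Ω | C u ω = k} = ENNReal.ofReal (p k))
    (k₁ k : Fin K) (hk : k ≠ k₁) (hbeat : p k₁ < p k) :
    P {ω : Ω | ∀ j : Fin K, j ≠ k₁ →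
          (Finset.univ.filter (fun u => C u ω = j)).card
            ≤ (Finset.univ.filter (fun u => C u ω = k₁)).card}
      ≤ ENNReal.ofReal
          (Real.exp (-(N : ℝ) * (Real.sqrt (p k) - Real.sqrt (p k₁)) ^ 2)) := by
  classical
  have hp1 := hp k₁
  have hpk := hp k
  set a := Real.sqrt (p k₁) with ha
  set b := Real.sqrt (p k) with hb
  have ha0 : 0 ≤ a := Real.sqrt_nonneg _
  have hpkpos : 0 < p k := lt_of_le_of_lt hp1 hbeat
  have hb0 : 0 < b := Real.sqrt_pos.mpr hpkpos
  have hab : a < b := Real.sqrt_lt_sqrt hp1 hbeat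
  have ha2 : a ^ 2 = p k₁ := Real.sq_sqrt hp1
  have hb2 : b ^ 2 = p k := Real.sq_sqrt hpk
  have hsum2 : p k₁ + p k ≤ 1 := by
    have hss : ({k₁, k} : Finset (Fin K)) ⊆ univ := subset_univ _
    have := Finset.sum_le_sum_of_subset_of_nonneg hss (fun j _ _ => hp j)
    rwa [Finset.sum_pair (Ne.symm hk), hsum] at this
  -- choose the Chernoff parameter t
  obtain ⟨t, ht0, hgt⟩ : ∃ t : ℝ, 0 ≤ t ∧
      p k₁ * Real.exp t + p k * Real.exp (-t) + (1 - p k₁ - p k)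
        ≤ Real.exp (-(b - a) ^ 2) := by
    rcases eq_or_lt_of_le hp1 with h0 | hpos
    · -- p k₁ = 0
      have ha' : a = 0 := by rw [ha, ← h0, Real.sqrt_zero]
      have hclt : 1 - p k < Real.exp (-p k) := by
        have := Real.add_one_lt_exp (x := -p k) (by linarith)
        linarith
      set c := Real.exp (-p k) - (1 - p k) with hc
      have hcpos : 0 < c := by simp only [hc]; linarith
      have hcle : c ≤ p k := by
        have : Real.exp (-p k) ≤ 1 := Real.exp_le_one_iff.mpr (by linarith)
        simp only [hc]; linarith
      refine ⟨Real.log (p k / c), Real.log_nonneg ((one_le_div hcpos).mpr hcle), ?_⟩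
      have hexp : Real.exp (Real.log (p k / c)) = p k / c :=
        Real.exp_log (div_pos hpkpos hcpos)
      rw [Real.exp_neg, hexp, ← h0, ha']
      have : p k * (p k / c)⁻¹ = c := by
        field_simp
      rw [this]
      have : (b - 0) ^ 2 = p k := by rw [sub_zero, hb2]
      rw [this, hc]
      ring_nf
      linarith [le_refl (Real.exp (-p k))]
    · -- p k₁ > 0
      have ha' : 0 < a := Real.sqrt_pos.mpr hpos
      refine ⟨Real.log (b / a), Real.log_nonneg ((one_le_div ha').mpr hab.le), ?_⟩
      have hexp : Real.exp (Real.log (b / a)) = b / a :=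
        Real.exp_log (div_pos hb0 ha')
      rw [Real.exp_neg, hexp]
      have heq : p k₁ * (b / a) + p k * (b / a)⁻¹ + (1 - p k₁ - p k)
          = 1 - (b - a) ^ 2 := by
        rw [← ha2, ← hb2]
        field_simp
        ring
      rw [heq]
      have := Real.add_one_le_exp (-(b - a) ^ 2)
      linarith
  -- the auxiliary random variables
  set X : Fin N → Ω → ℝ := fun u ω =>
    (if C u ω = k₁ then (1 : ℝ) else 0) - (if C u ω = k then (1 : ℝ) else 0) with hX
  set g : Fin K → ℝ := fun j =>
    (if j = k₁ then (1 : ℝ) else 0) - (if j = k then (1 : ℝ) else 0) with hg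
  have hXg : ∀ u, X u = g ∘ C u := fun u => rfl
  have hXm : ∀ u, Measurable (X u) := fun u =>
    (measurable_of_countable g).comp (hmeas u)
  have hXindep : iIndepFun X P := by
    have := hindep.comp (fun _ => g) (fun _ => measurable_of_countable g)
    exact this
  set G : ℝ := p k₁ * Real.exp t + p k * Real.exp (-t) + (1 - p k₁ - p k) with hG
  have hG0 : 0 ≤ G := by
    have h1 : 0 ≤ 1 - p k₁ - p k := by linarith
    have := Real.exp_pos t
    have := Real.exp_pos (-t)
    nlinarith
  -- mgf of each X u
  have key : ∀ u, mgf (X u) P t = G := by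
    intro u
    have hint1 : ∫ y, Real.exp (t * g y) ∂(P.map (C u))
        = ∫ ω, Real.exp (t * g (C u ω)) ∂P :=
      integral_map (hmeas u).aemeasurable
        (measurable_of_countable _).aestronglyMeasurable
    have hstep : mgf (X u) P t = ∫ y, Real.exp (t * g y) ∂(P.map (C u)) := by
      rw [mgf]; exact hint1.symm
    rw [hstep]
    haveI : IsProbabilityMeasure (P.map (C u)) := Measure.isProbabilityMeasure_map (hmeas u).aemeasurable
    rw [integral_fintype Integrable.of_finite]
    have hmap : ∀ j : Fin K, ((P.map (C u)) {j}).toReal = p j := by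
      intro j
      rw [Measure.map_apply (hmeas u) (MeasurableSet.singleton j)]
      have : (C u) ⁻¹' {j} = {ω | C u ω = j} := rfl
      rw [this, hdist u j, ENNReal.toReal_ofReal (hp j)]
    simp only [smul_eq_mul, measureReal_def, hmap]
    have hterm : ∀ j : Fin K, p j * Real.exp (t * g j)
        = p j + (if j = k₁ then p j * (Real.exp t - 1) else 0)
            + (if j = k then p j * (Real.exp (-t) - 1) else 0) := by
      intro j
      have hkk : k₁ ≠ k := Ne.symm hk
      by_cases hj1 : j = k₁
      · subst hj1
        simp [hg, hkk, hk]
        ring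
      · by_cases hj2 : j = k
        · subst hj2
          simp [hg, hj1]
          ring
        · simp [hg, hj1, hj2]
    rw [Finset.sum_congr rfl fun j _ => hterm j]
    rw [Finset.sum_add_distrib, Finset.sum_add_distrib, hsum,
      Finset.sum_ite_eq' univ k₁ (fun j => p j * (Real.exp t - 1)),
      Finset.sum_ite_eq' univ k (fun j => p j * (Real.exp (-t) - 1))]
    simp only [mem_univ, if_pos, hG]
    ring
  -- mgf of the sum
  have hSmgf : mgf (∑ u, X u) P t = G ^ N := by
    rw [hXindep.mgf_sum hXm Finset.univ]
    simp only [key, Finset.prod_const, Finset.card_univ, Fintype.card_fin]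
  -- integrability for Chernoff
  have hSm : Measurable (fun ω => ∑ u, X u ω) :=
    Finset.measurable_sum univ (fun u _ => hXm u)
  have hXbd : ∀ u ω, |X u ω| ≤ 1 := by
    intro u ω
    simp only [hX]
    split_ifs <;> norm_num
  have hint : Integrable (fun ω => Real.exp (t * (∑ u, X u) ω)) P := by
    have hm : Measurable (fun ω => Real.exp (t * (∑ u, X u) ω)) := by
      simp only [Finset.sum_apply]
      exact (hSm.const_mul t).exp
    refine Integrable.mono' (integrable_const (Real.exp (|t| * N))) hm.aestronglyMeasurable
      (Filter.Eventually.of_forall fun ω => ?_)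
    rw [Real.norm_eq_abs, abs_of_pos (Real.exp_pos _), Real.exp_le_exp]
    have hSb : |(∑ u, X u) ω| ≤ (N : ℝ) := by
      rw [Finset.sum_apply]
      calc |∑ u, X u ω| ≤ ∑ u, |X u ω| := Finset.abs_sum_le_sum_abs _ _
        _ ≤ ∑ _u : Fin N, (1 : ℝ) := Finset.sum_le_sum fun u _ => hXbd u ω
        _ = N := by simp
    calc t * (∑ u, X u) ω ≤ |t * (∑ u, X u) ω| := le_abs_self _
      _ = |t| * |(∑ u, X u) ω| := abs_mul _ _
      _ ≤ |t| * N := by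
          exact mul_le_mul_of_nonneg_left hSb (abs_nonneg t)
  -- Chernoff bound
  have hch := measure_ge_le_exp_mul_mgf (μ := P) (X := ∑ u, X u) 0 ht0 hint
  rw [mul_zero, Real.exp_zero, one_mul, hSmgf] at hch
  -- event inclusion
  have hsub : {ω : Ω | ∀ j : Fin K, j ≠ k₁ →
          (Finset.univ.filter (fun u => C u ω = j)).card
            ≤ (Finset.univ.filter (fun u => C u ω = k₁)).card}
      ⊆ {ω : Ω | (0 : ℝ) ≤ (∑ u, X u) ω} := by
    intro ω hω
    have hcard := hω k hk
    simp only [Set.mem_setOf_eq, Finset.sum_apply]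
    have h1 : ∑ u, X u ω
        = ((univ.filter (fun u => C u ω = k₁)).card : ℝ)
          - ((univ.filter (fun u => C u ω = k)).card : ℝ) := by
      simp only [hX]
      rw [Finset.sum_sub_distrib, Finset.sum_boole, Finset.sum_boole]
    rw [h1]
    have : ((univ.filter (fun u => C u ω = k)).card : ℝ)
        ≤ ((univ.filter (fun u => C u ω = k₁)).card : ℝ) := by exact_mod_cast hcard
    linarith
  calc P {ω : Ω | ∀ j : Fin K, j ≠ k₁ →
          (Finset.univ.filter (fun u => C u ω = j)).card
            ≤ (Finset.univ.filter (fun u => C u ω = k₁)).card}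
      ≤ P {ω : Ω | (0 : ℝ) ≤ (∑ u, X u) ω} := measure_mono hsub
    _ ≤ ENNReal.ofReal (Real.exp (-(N : ℝ) * (b - a) ^ 2)) := by
        rw [ENNReal.le_ofReal_iff_toReal_le (measure_ne_top _ _) (Real.exp_nonneg _)]
        calc (P {ω : Ω | (0 : ℝ) ≤ (∑ u, X u) ω}).toReal ≤ G ^ N := hch
          _ ≤ (Real.exp (-(b - a) ^ 2)) ^ N := pow_le_pow_left₀ hG0 hgt N
          _ = Real.exp (-(N : ℝ) * (b - a) ^ 2) := by
              rw [← Real.exp_nat_mul]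
              ring_nf
end

section
/- Let Ũ_k^(N) = Σ_{u=1}^N S_{k,u}·1{C_u = k} where C_u are i.i.d. K-category draws with Pr(C_u = k) = p_k and S_{k,u} ~ N(μ_k, σ_k²) are independent Gaussian scores. If p_a·μ_a > p_b·μ_b, then Pr(Ũ_a^(N) ≤ Ũ_b^(N)) ≤ inf_{t>0} exp( N·p_a·(e^{-tμ_a + t²σ_a²/2} − 1) + N·p_b·(e^{tμ_b + t²σ_b²/2} − 1) ). -/
open MeasureTheory ProbabilityTheory Real Finset Classical

/-- Index family for joint independence of the category draws (left) and the Gaussian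
scores (right). -/
def mixType (K N : ℕ) : Fin N ⊕ (Fin K × Fin N) → Type :=
  fun i => Sum.elim (fun _ => Fin K) (fun _ => ℝ) i

noncomputable instance (K N : ℕ) (i : Fin N ⊕ (Fin K × Fin N)) :
    MeasurableSpace (mixType K N i) := by
  cases i with
  | inl _ => exact inferInstanceAs (MeasurableSpace (Fin K))
  | inr _ => exact inferInstanceAs (MeasurableSpace ℝ)

open scoped NNReal ENNReal

lemma gauss_pdf_key (m : ℝ) (v : ℝ≥0) (hv : v ≠ 0) (c x : ℝ) :
    exp (c * x) * gaussianPDFReal m v x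
      = exp (c * m + v * c ^ 2 / 2) * gaussianPDFReal (m + c * v) v x := by
  have hv' : (v : ℝ) ≠ 0 := by exact_mod_cast hv
  simp only [gaussianPDFReal]
  rw [mul_left_comm, mul_left_comm (exp (c * m + v * c ^ 2 / 2)), ← exp_add, ← exp_add]
  congr 2
  field_simp
  ring

lemma gauss_mgf_integrable (m : ℝ) (v : ℝ≥0) (c : ℝ) :
    Integrable (fun x => exp (c * x)) (gaussianReal m v) := by
  rcases eq_or_ne v 0 with rfl | hv
  · rw [gaussianReal_zero_var]
    refine ⟨(measurable_const.mul measurable_id).exp.aestronglyMeasurable, ?_⟩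
    rw [HasFiniteIntegral, lintegral_dirac' _ (by fun_prop)]
    exact ENNReal.coe_lt_top
  · rw [gaussianReal_of_var_ne_zero _ hv]
    rw [integrable_withDensity_iff (measurable_gaussianPDF _ _)
      (Filter.Eventually.of_forall fun x => ENNReal.ofReal_lt_top)]
    have : (fun x => exp (c * x) * (gaussianPDF m v x).toReal)
        = fun x => exp (c * m + v * c ^ 2 / 2) * gaussianPDFReal (m + c * v) v x := by
      funext x
      rw [gaussianPDF, ENNReal.toReal_ofReal (gaussianPDFReal_nonneg m v x)]
      exact gauss_pdf_key m v hv c x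
    rw [this]
    exact (integrable_gaussianPDFReal _ _).const_mul _

lemma gauss_mgf_integral (m : ℝ) (v : ℝ≥0) (c : ℝ) :
    ∫ x, exp (c * x) ∂(gaussianReal m v) = exp (c * m + v * c ^ 2 / 2) := by
  rcases eq_or_ne v 0 with rfl | hv
  · rw [gaussianReal_zero_var, integral_dirac]
    simp
  · rw [gaussianReal_of_var_ne_zero _ hv]
    have h1 : gaussianPDF m v
        = fun x => (((gaussianPDFReal m v x).toNNReal : ℝ≥0) : ℝ≥0∞) := rfl
    rw [h1, integral_withDensity_eq_integral_smul
      ((measurable_gaussianPDFReal m v).real_toNNReal)]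
    have : (fun x => (gaussianPDFReal m v x).toNNReal • exp (c * x))
        = fun x => exp (c * m + v * c ^ 2 / 2) * gaussianPDFReal (m + c * v) v x := by
      funext x
      rw [NNReal.smul_def, smul_eq_mul,
        Real.coe_toNNReal _ (gaussianPDFReal_nonneg m v x), mul_comm]
      exact gauss_pdf_key m v hv c x
    rw [this, integral_const_mul, integral_gaussianPDFReal_eq_one _ hv, mul_one]

lemma rv_exp {Ω : Type*} [MeasurableSpace Ω] (P : Measure Ω) {S : Ω → ℝ} (hS : Measurable S)
    {m : ℝ} {v : ℝ≥0} (hg : Measure.map S P = gaussianReal m v) (c : ℝ) :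
    Integrable (fun ω => exp (c * S ω)) P ∧
      ∫ ω, exp (c * S ω) ∂P = exp (c * m + v * c ^ 2 / 2) := by
  have hmeas : Measurable fun x : ℝ => exp (c * x) := by fun_prop
  constructor
  · have h := gauss_mgf_integrable m v c
    rw [← hg] at h
    exact (integrable_map_measure hmeas.aestronglyMeasurable hS.aemeasurable).1 h
  · have h : ∫ y, exp (c * y) ∂(Measure.map S P) = ∫ ω, exp (c * S ω) ∂P :=
      integral_map hS.aemeasurable (by rw [hg]; exact hmeas.aestronglyMeasurable)
    rw [hg, gauss_mgf_integral] at h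
    exact h.symm

lemma ind_exp {Ω : Type*} [MeasurableSpace Ω] (P : Measure Ω) [IsProbabilityMeasure P]
    {K : ℕ} {C : Ω → Fin K} (hC : Measurable C) {S : Ω → ℝ} (hS : Measurable S)
    (k : Fin K) {pk : ℝ} (hpk : 0 ≤ pk) (hd : P {ω | C ω = k} = ENNReal.ofReal pk)
    {m : ℝ} {v : ℝ≥0} (hg : Measure.map S P = gaussianReal m v)
    (hi : IndepFun C S P) (c : ℝ) :
    Integrable (fun ω => (if C ω = k then (1:ℝ) else 0) * exp (c * S ω)) P ∧
      ∫ ω, (if C ω = k then (1:ℝ) else 0) * exp (c * S ω) ∂P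
        = pk * exp (c * m + v * c ^ 2 / 2) := by
  have hsetm : MeasurableSet {ω | C ω = k} := hC (measurableSet_singleton k)
  have hind_eq : (fun ω => if C ω = k then (1:ℝ) else 0)
      = Set.indicator {ω | C ω = k} (fun _ => (1:ℝ)) := by
    funext ω
    simp [Set.indicator_apply, Set.mem_setOf_eq]
  have hind_int : Integrable (fun ω => if C ω = k then (1:ℝ) else 0) P := by
    rw [hind_eq]
    exact (integrable_const (1:ℝ)).indicator hsetm
  have hind_val : ∫ ω, (if C ω = k then (1:ℝ) else 0) ∂P = pk := by
    rw [hind_eq, integral_indicator_const (1:ℝ) hsetm, measureReal_def, hd, smul_eq_mul, mul_one,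
      ENNReal.toReal_ofReal hpk]
  have hexp := rv_exp P hS hg c
  have hIndep : IndepFun (fun ω => if C ω = k then (1:ℝ) else 0)
      (fun ω => exp (c * S ω)) P :=
    hi.comp (φ := fun j : Fin K => if j = k then (1:ℝ) else 0)
      (ψ := fun x : ℝ => exp (c * x)) (measurable_from_top) (by fun_prop)
  constructor
  · exact hIndep.integrable_mul hind_int hexp.1
  · have h := hIndep.integral_fun_mul_eq_mul_integral hind_int.aestronglyMeasurable hexp.1.aestronglyMeasurable
    calc ∫ ω, (if C ω = k then (1:ℝ) else 0) * exp (c * S ω) ∂P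
        = (∫ ω, (if C ω = k then (1:ℝ) else 0) ∂P) * ∫ ω, exp (c * S ω) ∂P := h
      _ = pk * exp (c * m + v * c ^ 2 / 2) := by rw [hind_val, hexp.2]

lemma one_step {Ω : Type*} [MeasurableSpace Ω] (P : Measure Ω) [IsProbabilityMeasure P]
    {K : ℕ} {C : Ω → Fin K} (hC : Measurable C) {Sa Sb : Ω → ℝ}
    (hSa : Measurable Sa) (hSb : Measurable Sb)
    (a b : Fin K) (hab : a ≠ b) {pa pb : ℝ} (hpa : 0 ≤ pa) (hpb : 0 ≤ pb)
    (hda : P {ω | C ω = a} = ENNReal.ofReal pa) (hdb : P {ω | C ω = b} = ENNReal.ofReal pb)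
    {ma mb : ℝ} {va vb : ℝ≥0}
    (hga : Measure.map Sa P = gaussianReal ma va) (hgb : Measure.map Sb P = gaussianReal mb vb)
    (hia : IndepFun C Sa P) (hib : IndepFun C Sb P) (t : ℝ) :
    Integrable (fun ω => exp (t * ((if C ω = b then Sb ω else 0)
        - (if C ω = a then Sa ω else 0)))) P ∧
    ∫ ω, exp (t * ((if C ω = b then Sb ω else 0) - (if C ω = a then Sa ω else 0))) ∂P
      = 1 + pa * (exp (-t * ma + va * t ^ 2 / 2) - 1)
        + pb * (exp (t * mb + vb * t ^ 2 / 2) - 1) := by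
  have hdecomp : (fun ω => exp (t * ((if C ω = b then Sb ω else 0)
      - (if C ω = a then Sa ω else 0))))
      = fun ω => ((if C ω = a then (1:ℝ) else 0) * exp (-t * Sa ω)
        + (if C ω = b then (1:ℝ) else 0) * exp (t * Sb ω))
        + (1 - (if C ω = a then (1:ℝ) else 0) - (if C ω = b then (1:ℝ) else 0)) := by
    funext ω
    by_cases h1 : C ω = a
    · simp [h1, hab]
    · by_cases h2 : C ω = b
      · simp [h2, hab.symm]
      · simp [h1, h2]
  have hA := ind_exp P hC hSa a hpa hda hga hia (-t)
  have hB := ind_exp P hC hSb b hpb hdb hgb hib t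
  have hind_int : ∀ k : Fin K, Integrable (fun ω => if C ω = k then (1:ℝ) else 0) P := by
    intro k
    have hsetm : MeasurableSet {ω | C ω = k} := hC (measurableSet_singleton k)
    have : (fun ω => if C ω = k then (1:ℝ) else 0)
        = Set.indicator {ω | C ω = k} (fun _ => (1:ℝ)) := by
      funext ω; simp [Set.indicator_apply, Set.mem_setOf_eq]
    rw [this]
    exact (integrable_const (1:ℝ)).indicator hsetm
  have hind_val : ∀ (k : Fin K) (pk : ℝ), 0 ≤ pk → P {ω | C ω = k} = ENNReal.ofReal pk →
      ∫ ω, (if C ω = k then (1:ℝ) else 0) ∂P = pk := by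
    intro k pk hpk hd
    have hsetm : MeasurableSet {ω | C ω = k} := hC (measurableSet_singleton k)
    have : (fun ω => if C ω = k then (1:ℝ) else 0)
        = Set.indicator {ω | C ω = k} (fun _ => (1:ℝ)) := by
      funext ω; simp [Set.indicator_apply, Set.mem_setOf_eq]
    rw [this, integral_indicator_const (1:ℝ) hsetm, measureReal_def, hd, smul_eq_mul, mul_one,
      ENNReal.toReal_ofReal hpk]
  have hconst_int : Integrable (fun ω => 1 - (if C ω = a then (1:ℝ) else 0)
      - (if C ω = b then (1:ℝ) else 0)) P :=
    ((integrable_const (1:ℝ)).sub (hind_int a)).sub (hind_int b)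
  constructor
  · rw [hdecomp]
    exact (hA.1.add hB.1).add hconst_int
  · have h12 : Integrable (fun ω => (if C ω = a then (1:ℝ) else 0) * exp (-t * Sa ω)
        + (if C ω = b then (1:ℝ) else 0) * exp (t * Sb ω)) P := hA.1.add hB.1
    rw [hdecomp, integral_add h12 hconst_int, integral_add hA.1 hB.1]
    have h1a : Integrable (fun ω => 1 - (if C ω = a then (1:ℝ) else 0)) P :=
      (integrable_const (1:ℝ)).sub (hind_int a)
    rw [hA.2, hB.2, integral_sub h1a (hind_int b),
      integral_sub (integrable_const (1:ℝ)) (hind_int a), integral_const,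
      hind_val a pa hpa hda, hind_val b pb hpb hdb]
    have hea : exp (-t * ma + (va : ℝ) * (-t) ^ 2 / 2) = exp (-t * ma + (va : ℝ) * t ^ 2 / 2) := by
      ring_nf
    simp only [probReal_univ, measure_univ, ENNReal.toReal_one, smul_eq_mul, one_mul]
    rw [hea]
    ring

def projK {K N : ℕ} {A : Finset (Fin N ⊕ (Fin K × Fin N))} (i : Fin N)
    (h : Sum.inl i ∈ A) (w : ∀ j : A, mixType K N j) : Fin K := w ⟨Sum.inl i, h⟩

def projR {K N : ℕ} {A : Finset (Fin N ⊕ (Fin K × Fin N))} (kv : Fin K × Fin N)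
    (h : Sum.inr kv ∈ A) (w : ∀ j : A, mixType K N j) : ℝ := w ⟨Sum.inr kv, h⟩

lemma projK_meas {K N : ℕ} {A : Finset (Fin N ⊕ (Fin K × Fin N))} (i : Fin N)
    (h : Sum.inl i ∈ A) : Measurable (projK i h) := measurable_pi_apply _

lemma projR_meas {K N : ℕ} {A : Finset (Fin N ⊕ (Fin K × Fin N))} (kv : Fin K × Fin N)
    (h : Sum.inr kv ∈ A) : Measurable (projR kv h) := measurable_pi_apply _

lemma block_indep {Ω : Type*} [MeasurableSpace Ω] {P : Measure Ω} {K N : ℕ}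
    {C : Fin N → Ω → Fin K} (hCmeas : ∀ u, Measurable (C u))
    {S : Fin K → Fin N → Ω → ℝ} (hSmeas : ∀ k u, Measurable (S k u))
    (hindep : iIndepFun
      (fun i : Fin N ⊕ (Fin K × Fin N) =>
        Sum.rec (motive := fun i => Ω → mixType K N i)
          (fun u => C u) (fun ku => S ku.1 ku.2) i) P)
    (a b : Fin K) (s : Finset (Fin N)) (u : Fin N) (hu : u ∉ s) :
    IndepFun (fun ω => (if C u ω = b then S b u ω else 0)
        - (if C u ω = a then S a u ω else 0))
      (fun ω => ∑ v ∈ s, ((if C v ω = b then S b v ω else 0)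
        - (if C v ω = a then S a v ω else 0))) P := by
  classical
  set T : Fin N → Finset (Fin N ⊕ (Fin K × Fin N)) :=
    fun v => {Sum.inl v, Sum.inr (a, v), Sum.inr (b, v)} with hT
  have hdisj : Disjoint (T u) (s.biUnion T) := by
    rw [Finset.disjoint_left]
    intro i hi hib
    rw [Finset.mem_biUnion] at hib
    obtain ⟨v, hv, hiv⟩ := hib
    simp only [hT, Finset.mem_insert, Finset.mem_singleton] at hi hiv
    have huv : u ≠ v := fun h => hu (h ▸ hv)
    rcases hi with h | h | h <;> rcases hiv with h' | h' | h' <;> rw [h] at h' <;>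
      simp_all
  have hFmeas : ∀ i, Measurable ((fun i : Fin N ⊕ (Fin K × Fin N) =>
      Sum.rec (motive := fun i => Ω → mixType K N i)
        (fun u => C u) (fun ku => S ku.1 ku.2) i) i) := by
    intro i
    cases i with
    | inl v => exact hCmeas v
    | inr kv => exact hSmeas kv.1 kv.2
  have h := hindep.indepFun_finset (T u) (s.biUnion T) hdisj hFmeas
  have m1 : Sum.inl u ∈ T u := by simp [hT]
  have m2 : (Sum.inr (a, u) : Fin N ⊕ (Fin K × Fin N)) ∈ T u := by simp [hT]
  have m3 : (Sum.inr (b, u) : Fin N ⊕ (Fin K × Fin N)) ∈ T u := by simp [hT]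
  have hg1 : Measurable (fun w : (∀ i : (T u : Finset _), mixType K N i) =>
      (if projK u m1 w = b then projR (b, u) m3 w else 0)
        - (if projK u m1 w = a then projR (a, u) m2 w else 0)) := by
    apply Measurable.sub
    · exact Measurable.ite ((projK_meas _ _) (measurableSet_singleton b))
        (projR_meas _ _) measurable_const
    · exact Measurable.ite ((projK_meas _ _) (measurableSet_singleton a))
        (projR_meas _ _) measurable_const
  have hg2 : Measurable (fun w : (∀ i : (s.biUnion T : Finset _), mixType K N i) =>
      ∑ v ∈ s.attach,
        ((if projK v.1 (Finset.mem_biUnion.2 ⟨v.1, v.2, by simp [hT]⟩) w = b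
            then projR (b, v.1) (Finset.mem_biUnion.2 ⟨v.1, v.2, by simp [hT]⟩) w else 0)
          - (if projK v.1 (Finset.mem_biUnion.2 ⟨v.1, v.2, by simp [hT]⟩) w = a
            then projR (a, v.1) (Finset.mem_biUnion.2 ⟨v.1, v.2, by simp [hT]⟩) w else 0))) := by
    apply Finset.measurable_sum
    intro v _
    apply Measurable.sub
    · exact Measurable.ite ((projK_meas _ _) (measurableSet_singleton b))
        (projR_meas _ _) measurable_const
    · exact Measurable.ite ((projK_meas _ _) (measurableSet_singleton a))
        (projR_meas _ _) measurable_const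
  have h2 := h.comp hg1 hg2
  have e1 : ((fun w : (∀ i : (T u : Finset _), mixType K N i) =>
      (if projK u m1 w = b then projR (b, u) m3 w else 0)
        - (if projK u m1 w = a then projR (a, u) m2 w else 0))
      ∘ (fun ω (i : (T u : Finset _)) =>
        (fun i : Fin N ⊕ (Fin K × Fin N) =>
          Sum.rec (motive := fun i => Ω → mixType K N i)
            (fun u => C u) (fun ku => S ku.1 ku.2) i) i ω))
      = fun ω => (if C u ω = b then S b u ω else 0) - (if C u ω = a then S a u ω else 0) := rfl
  have e2 : ((fun w : (∀ i : (s.biUnion T : Finset _), mixType K N i) =>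
      ∑ v ∈ s.attach,
        ((if projK v.1 (Finset.mem_biUnion.2 ⟨v.1, v.2, by simp [hT]⟩) w = b
            then projR (b, v.1) (Finset.mem_biUnion.2 ⟨v.1, v.2, by simp [hT]⟩) w else 0)
          - (if projK v.1 (Finset.mem_biUnion.2 ⟨v.1, v.2, by simp [hT]⟩) w = a
            then projR (a, v.1) (Finset.mem_biUnion.2 ⟨v.1, v.2, by simp [hT]⟩) w else 0)))
      ∘ (fun ω (i : (s.biUnion T : Finset _)) =>
        (fun i : Fin N ⊕ (Fin K × Fin N) =>
          Sum.rec (motive := fun i => Ω → mixType K N i)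
            (fun u => C u) (fun ku => S ku.1 ku.2) i) i ω))
      = fun ω => ∑ v ∈ s, ((if C v ω = b then S b v ω else 0)
        - (if C v ω = a then S a v ω else 0)) := by
    funext ω
    rw [Function.comp_apply, ← Finset.sum_attach s
      (fun v => (if C v ω = b then S b v ω else 0) - (if C v ω = a then S a v ω else 0))]
    exact Finset.sum_congr rfl fun v _ => rfl
  rw [e1, e2] at h2
  exact h2


/-- Chernoff bound for score-sum aggregation: with Ũ_k = Σ_u S_{k,u}·1{C_u = k}, if
p_a μ_a > p_b μ_b then Pr(Ũ_a ≤ Ũ_b) ≤ inf_{t>0} exp(N p_a (e^{-tμ_a + t²σ_a²/2} - 1)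
+ N p_b (e^{tμ_b + t²σ_b²/2} - 1)). -/
theorem stmt9 {Ω : Type*} [MeasurableSpace Ω] (P : Measure Ω) [IsProbabilityMeasure P]
    (K N : ℕ) (p μ σ : Fin K → ℝ) (hp : ∀ k, 0 ≤ p k) (hsum : ∑ k, p k = 1)
    (C : Fin N → Ω → Fin K) (hCmeas : ∀ u, Measurable (C u))
    (S : Fin K → Fin N → Ω → ℝ) (hSmeas : ∀ k u, Measurable (S k u))
    (hdist : ∀ (u : Fin N) (k : Fin K), P {ω : Ω | C u ω = k} = ENNReal.ofReal (p k))
    (hgauss : ∀ (k : Fin K) (u : Fin N),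
      Measure.map (S k u) P = gaussianReal (μ k) ((σ k ^ 2).toNNReal))
    (hindep : iIndepFun
      (fun i : Fin N ⊕ (Fin K × Fin N) =>
        Sum.rec (motive := fun i => Ω → mixType K N i)
          (fun u => C u) (fun ku => S ku.1 ku.2) i) P)
    (a b : Fin K) (hab : a ≠ b) (hmean : p b * μ b < p a * μ a) :
    P {ω : Ω | ∑ u, (if C u ω = a then S a u ω else 0)
        ≤ ∑ u, (if C u ω = b then S b u ω else 0)}
      ≤ ENNReal.ofReal (⨅ t : Set.Ioi (0 : ℝ),
          Real.exp ((N : ℝ) * p a * (Real.exp (-(t : ℝ) * μ a + (t : ℝ) ^ 2 * σ a ^ 2 / 2) - 1)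
            + (N : ℝ) * p b * (Real.exp ((t : ℝ) * μ b + (t : ℝ) ^ 2 * σ b ^ 2 / 2) - 1))) := by
  classical
  obtain ⟨D, hD⟩ : ∃ D : Fin N → Ω → ℝ, D = fun u ω =>
      (if C u ω = b then S b u ω else 0) - (if C u ω = a then S a u ω else 0) := ⟨_, rfl⟩
  have hblock : ∀ (s : Finset (Fin N)) (u : Fin N), u ∉ s →
      IndepFun (D u) (fun ω => ∑ v ∈ s, D v ω) P := by
    rw [hD]
    intro s u hu
    exact block_indep hCmeas hSmeas hindep a b s u hu
  have hCS : ∀ (k : Fin K) (u : Fin N), IndepFun (C u) (S k u) P := by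
    intro k u
    exact hindep.indepFun (i := Sum.inl u) (j := Sum.inr (k, u)) (by simp)
  have honestep : ∀ (u : Fin N) (t : ℝ),
      Integrable (fun ω => exp (t * D u ω)) P ∧
      ∫ ω, exp (t * D u ω) ∂P
        = 1 + p a * (exp (-t * μ a + t ^ 2 * σ a ^ 2 / 2) - 1)
          + p b * (exp (t * μ b + t ^ 2 * σ b ^ 2 / 2) - 1) := by
    rw [hD]
    intro u t
    have h := one_step P (hCmeas u) (hSmeas a u) (hSmeas b u) a b hab (hp a) (hp b)
      (hdist u a) (hdist u b) (hgauss a u) (hgauss b u) (hCS a u) (hCS b u) t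
    have hca : (((σ a ^ 2).toNNReal : ℝ≥0) : ℝ) = σ a ^ 2 := Real.coe_toNNReal _ (sq_nonneg _)
    have hcb : (((σ b ^ 2).toNNReal : ℝ≥0) : ℝ) = σ b ^ 2 := Real.coe_toNNReal _ (sq_nonneg _)
    rw [hca, hcb] at h
    have ea : -t * μ a + σ a ^ 2 * t ^ 2 / 2 = -t * μ a + t ^ 2 * σ a ^ 2 / 2 := by ring
    have eb : t * μ b + σ b ^ 2 * t ^ 2 / 2 = t * μ b + t ^ 2 * σ b ^ 2 / 2 := by ring
    rw [ea, eb] at h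
    exact h
  have hab_sum : p a + p b ≤ 1 := by
    rw [← hsum, ← Finset.sum_pair hab]
    exact Finset.sum_le_sum_of_subset_of_nonneg (Finset.subset_univ _) (fun k _ _ => hp k)
  have key : ∀ t : ℝ, 0 < t →
      (P {ω | (0:ℝ) ≤ ∑ u, D u ω}).toReal
        ≤ exp ((N : ℝ) * p a * (exp (-t * μ a + t ^ 2 * σ a ^ 2 / 2) - 1)
            + (N : ℝ) * p b * (exp (t * μ b + t ^ 2 * σ b ^ 2 / 2) - 1)) := by
    intro t ht
    set q : ℝ := p a * (exp (-t * μ a + t ^ 2 * σ a ^ 2 / 2) - 1)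
      + p b * (exp (t * μ b + t ^ 2 * σ b ^ 2 / 2) - 1) with hq
    have hqval : ∀ u : Fin N, ∫ ω, exp (t * D u ω) ∂P = 1 + q := by
      intro u
      rw [(honestep u t).2, hq]
      ring
    have hmain : ∀ s : Finset (Fin N),
        Integrable (fun ω => exp (t * ∑ v ∈ s, D v ω)) P ∧
        ∫ ω, exp (t * ∑ v ∈ s, D v ω) ∂P = (1 + q) ^ s.card := by
      intro s
      induction s using Finset.induction_on with
      | empty => simp
      | @insert u s hu ih =>
        have hsum_eq : (fun ω => exp (t * ∑ v ∈ insert u s, D v ω))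
            = fun ω => exp (t * D u ω) * exp (t * ∑ v ∈ s, D v ω) := by
          funext ω
          rw [Finset.sum_insert hu, mul_add, exp_add]
        have hindep' : IndepFun (fun ω => exp (t * D u ω))
            (fun ω => exp (t * ∑ v ∈ s, D v ω)) P :=
          (hblock s u hu).comp (φ := fun x : ℝ => exp (t * x))
            (ψ := fun x : ℝ => exp (t * x)) (by fun_prop) (by fun_prop)
        have hint : Integrable (fun ω => exp (t * ∑ v ∈ insert u s, D v ω)) P := by
          rw [hsum_eq]
          exact hindep'.integrable_mul (honestep u t).1 ih.1
        refine ⟨hint, ?_⟩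
        have hmul : ∫ ω, exp (t * D u ω) * exp (t * ∑ v ∈ s, D v ω) ∂P
            = (∫ ω, exp (t * D u ω) ∂P) * ∫ ω, exp (t * ∑ v ∈ s, D v ω) ∂P :=
          hindep'.integral_fun_mul_eq_mul_integral (honestep u t).1.aestronglyMeasurable ih.1.aestronglyMeasurable
        rw [hsum_eq, hmul, hqval u, ih.2, Finset.card_insert_of_notMem hu, pow_succ]
        ring
    have hX := hmain Finset.univ
    have hq0 : 0 ≤ 1 + q := by
      rw [hq]
      nlinarith [Real.exp_pos (-t * μ a + t ^ 2 * σ a ^ 2 / 2),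
        Real.exp_pos (t * μ b + t ^ 2 * σ b ^ 2 / 2), hp a, hp b, hab_sum]
    have hmgf : mgf (fun ω => ∑ u, D u ω) P t = (1 + q) ^ N := by
      have h0 : mgf (fun ω => ∑ u, D u ω) P t
          = ∫ ω, exp (t * ∑ u, D u ω) ∂P := rfl
      rw [h0, hX.2, Finset.card_univ, Fintype.card_fin]
    have hpow : (1 + q) ^ N ≤ exp ((N : ℝ) * q) := by
      calc (1 + q) ^ N ≤ exp q ^ N :=
            pow_le_pow_left₀ hq0 (by linarith [add_one_le_exp q]) N
        _ = exp ((N : ℝ) * q) := by rw [← Real.exp_nat_mul]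
    have hmarkov := measure_ge_le_exp_mul_mgf (X := fun ω => ∑ u, D u ω) (μ := P)
      0 ht.le hX.1
    calc (P {ω | (0:ℝ) ≤ ∑ u, D u ω}).toReal
        ≤ exp (-t * 0) * mgf (fun ω => ∑ u, D u ω) P t := hmarkov
      _ = (1 + q) ^ N := by rw [hmgf]; simp
      _ ≤ exp ((N : ℝ) * q) := hpow
      _ = exp ((N : ℝ) * p a * (exp (-t * μ a + t ^ 2 * σ a ^ 2 / 2) - 1)
            + (N : ℝ) * p b * (exp (t * μ b + t ^ 2 * σ b ^ 2 / 2) - 1)) := by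
          rw [hq]; congr 1; ring
  have hEvent : {ω : Ω | ∑ u, (if C u ω = a then S a u ω else 0)
      ≤ ∑ u, (if C u ω = b then S b u ω else 0)} = {ω | (0:ℝ) ≤ ∑ u, D u ω} := by
    rw [hD]
    ext ω
    simp only [Set.mem_setOf_eq, Finset.sum_sub_distrib, sub_nonneg]
  rw [hEvent]
  haveI : Nonempty (Set.Ioi (0:ℝ)) := ⟨⟨1, by norm_num⟩⟩
  have hne : P {ω | (0:ℝ) ≤ ∑ u, D u ω} ≠ ⊤ := measure_ne_top _ _
  rw [← ENNReal.ofReal_toReal hne]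
  apply ENNReal.ofReal_le_ofReal
  exact le_ciInf fun t => key t t.2
end

section
/- For p_a, p_b > 0 with p_a·μ_a > p_b·μ_b, the quantity inf_{t>0} exp( N·p_a·(e^{-tμ_a + t²σ_a²/2} − 1) + N·p_b·(e^{tμ_b + t²σ_b²/2} − 1) ) tends to 0 as N → ∞. -/
open Real Filter

theorem exists_neg_point (p_a p_b μ_a μ_b σ_a σ_b : ℝ) (hpa : 0 < p_a) (hpb : 0 < p_b)
    (hmean : p_b * μ_b < p_a * μ_a) :
    ∃ t : ℝ, 0 < t ∧
      p_a * (Real.exp (-t * μ_a + t ^ 2 * σ_a ^ 2 / 2) - 1)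
        + p_b * (Real.exp (t * μ_b + t ^ 2 * σ_b ^ 2 / 2) - 1) < 0 := by
  set F : ℝ → ℝ := fun t => p_a * (Real.exp (-t * μ_a + t ^ 2 * σ_a ^ 2 / 2) - 1)
      + p_b * (Real.exp (t * μ_b + t ^ 2 * σ_b ^ 2 / 2) - 1) with hF
  have hF0 : F 0 = 0 := by simp [hF]
  have hg1 : HasDerivAt (fun t : ℝ => -t * μ_a + t ^ 2 * σ_a ^ 2 / 2) (-μ_a) 0 := by
    have h := (((hasDerivAt_id (0:ℝ)).neg.mul_const μ_a)).add
      ((((hasDerivAt_pow 2 (0:ℝ))).mul_const (σ_a ^ 2)).div_const 2)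
    exact h.congr_deriv (by ring)
  have hg2 : HasDerivAt (fun t : ℝ => t * μ_b + t ^ 2 * σ_b ^ 2 / 2) μ_b 0 := by
    have h := (((hasDerivAt_id (0:ℝ)).mul_const μ_b)).add
      ((((hasDerivAt_pow 2 (0:ℝ))).mul_const (σ_b ^ 2)).div_const 2)
    exact h.congr_deriv (by ring)
  have hD : HasDerivAt F (p_b * μ_b - p_a * μ_a) 0 := by
    have h1 := (hg1.exp.sub_const 1).const_mul p_a
    have h2 := (hg2.exp.sub_const 1).const_mul p_b
    have h := h1.add h2
    simp only [neg_zero, zero_mul, ne_eq, OfNat.ofNat_ne_zero, not_false_eq_true, zero_pow,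
      mul_zero, zero_div, add_zero, Real.exp_zero, mul_one, zero_add] at h
    exact h.congr_deriv (by ring)
  have hslope : Tendsto (fun t : ℝ => (F t - F 0) / (t - 0)) (nhdsWithin 0 {(0:ℝ)}ᶜ)
      (nhds (p_b * μ_b - p_a * μ_a)) := by
    have h := hasDerivAt_iff_tendsto_slope.mp hD
    refine h.congr fun t => ?_
    simp [slope_def_field, div_eq_inv_mul]
  have hneg : p_b * μ_b - p_a * μ_a < 0 := by linarith
  have hev : ∀ᶠ t in nhdsWithin (0:ℝ) {(0:ℝ)}ᶜ, (F t - F 0) / (t - 0) < 0 :=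
    hslope.eventually (Filter.Tendsto.eventually_lt_const hneg tendsto_id |>.mono (fun x hx => hx))
  have hle : nhdsWithin (0:ℝ) (Set.Ioi 0) ≤ nhdsWithin (0:ℝ) {(0:ℝ)}ᶜ :=
    nhdsWithin_mono _ (fun x hx => ne_of_gt hx)
  have hev2 : ∀ᶠ t in nhdsWithin (0:ℝ) (Set.Ioi 0), F t < 0 := by
    filter_upwards [hle hev, self_mem_nhdsWithin] with t ht ht0
    rw [hF0, sub_zero, sub_zero] at ht
    have : F t / t < 0 := ht
    have htpos : (0:ℝ) < t := ht0
    rcases div_neg_iff.mp this with ⟨_, h2⟩ | ⟨h1, _⟩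
    · linarith
    · exact h1
  rcases hev2.exists with ⟨t, ht0⟩
  -- need t > 0 too
  have hev3 : ∀ᶠ t in nhdsWithin (0:ℝ) (Set.Ioi 0), F t < 0 ∧ 0 < t :=
    hev2.and self_mem_nhdsWithin
  rcases hev3.exists with ⟨t, htF, htpos⟩
  exact ⟨t, htpos, htF⟩

/-- For p_a, p_b > 0 with p_a μ_a > p_b μ_b, the Chernoff bound
inf_{t>0} exp(N p_a (e^{-tμ_a + t²σ_a²/2} - 1) + N p_b (e^{tμ_b + t²σ_b²/2} - 1))
tends to 0 as N → ∞. -/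
theorem stmt11 (p_a p_b μ_a μ_b σ_a σ_b : ℝ) (hpa : 0 < p_a) (hpb : 0 < p_b)
    (hmean : p_b * μ_b < p_a * μ_a) :
    Tendsto (fun N : ℕ => ⨅ t : Set.Ioi (0 : ℝ),
        Real.exp ((N : ℝ) * p_a * (Real.exp (-(t : ℝ) * μ_a + (t : ℝ) ^ 2 * σ_a ^ 2 / 2) - 1)
          + (N : ℝ) * p_b * (Real.exp ((t : ℝ) * μ_b + (t : ℝ) ^ 2 * σ_b ^ 2 / 2) - 1)))
      atTop (nhds 0) := by
  obtain ⟨t₀, ht₀, hFneg⟩ := exists_neg_point p_a p_b μ_a μ_b σ_a σ_b hpa hpb hmean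
  set c : ℝ := p_a * (Real.exp (-t₀ * μ_a + t₀ ^ 2 * σ_a ^ 2 / 2) - 1)
      + p_b * (Real.exp (t₀ * μ_b + t₀ ^ 2 * σ_b ^ 2 / 2) - 1) with hc
  have hupper : ∀ N : ℕ, (⨅ t : Set.Ioi (0 : ℝ),
      Real.exp ((N : ℝ) * p_a * (Real.exp (-(t : ℝ) * μ_a + (t : ℝ) ^ 2 * σ_a ^ 2 / 2) - 1)
        + (N : ℝ) * p_b * (Real.exp ((t : ℝ) * μ_b + (t : ℝ) ^ 2 * σ_b ^ 2 / 2) - 1)))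
      ≤ Real.exp ((N : ℝ) * c) := by
    intro N
    have hbdd : BddBelow (Set.range fun t : Set.Ioi (0 : ℝ) =>
        Real.exp ((N : ℝ) * p_a * (Real.exp (-(t : ℝ) * μ_a + (t : ℝ) ^ 2 * σ_a ^ 2 / 2) - 1)
          + (N : ℝ) * p_b * (Real.exp ((t : ℝ) * μ_b + (t : ℝ) ^ 2 * σ_b ^ 2 / 2) - 1))) :=
      ⟨0, by rintro x ⟨t, rfl⟩; exact (Real.exp_pos _).le⟩
    have := ciInf_le hbdd (⟨t₀, ht₀⟩ : Set.Ioi (0:ℝ))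
    calc _ ≤ _ := this
      _ ≤ Real.exp ((N:ℝ) * c) := by
        apply le_of_eq
        congr 1
        simp only [hc]
        ring
  have hlower : ∀ N : ℕ, (0:ℝ) ≤ (⨅ t : Set.Ioi (0 : ℝ),
      Real.exp ((N : ℝ) * p_a * (Real.exp (-(t : ℝ) * μ_a + (t : ℝ) ^ 2 * σ_a ^ 2 / 2) - 1)
        + (N : ℝ) * p_b * (Real.exp ((t : ℝ) * μ_b + (t : ℝ) ^ 2 * σ_b ^ 2 / 2) - 1))) := by
    intro N
    exact le_ciInf fun t => (Real.exp_pos _).le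
  have htend : Tendsto (fun N : ℕ => Real.exp ((N : ℝ) * c)) atTop (nhds 0) := by
    apply Real.tendsto_exp_atBot.comp
    have : Tendsto (fun N : ℕ => (N : ℝ)) atTop atTop := tendsto_natCast_atTop_atTop
    exact this.atTop_mul_const_of_neg hFneg
  exact squeeze_zero hlower hupper htend
end

section
/- Let σ_a > σ_b > 0, p_a ∈ (0, 1], μ_a, μ_b ∈ ℝ, and choose ε > 0 small enough that 1 − (1+ε)·σ_b²/σ_a² > 0. With t_N = μ_b + σ_b·√(2(1+ε)·log N) and z_{a,N} = (t_N − μ_a)/σ_a, it holds that N·p_a·(1 − Φ(z_{a,N})) → ∞ as N → ∞, and hence (1 − p_a·(1 − Φ(z_{a,N})))^N → 0. -/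
open Real Filter ProbabilityTheory

/-- The standard normal cumulative distribution function. -/
noncomputable def stdNormalCDF (x : ℝ) : ℝ := cdf (gaussianReal 0 1) x

open MeasureTheory Set in
lemma tail_eq (x : ℝ) :
    1 - stdNormalCDF x = ∫ y in Set.Ioi x, gaussianPDFReal 0 1 y := by
  have h1 : stdNormalCDF x = ((gaussianReal 0 1) (Set.Iic x)).toReal :=
    cdf_eq_real _ x
  have h2 : (gaussianReal 0 1) (Set.Iic x) + (gaussianReal 0 1) (Set.Ioi x) = 1 := by
    rw [← measure_union (by simp [Set.disjoint_left]) measurableSet_Ioi]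
    simp [Set.Iic_union_Ioi]
  have h3 : (gaussianReal 0 1) (Set.Ioi x)
      = ENNReal.ofReal (∫ y in Set.Ioi x, gaussianPDFReal 0 1 y) :=
    gaussianReal_apply_eq_integral 0 one_ne_zero _
  have hIic : (gaussianReal 0 1) (Set.Iic x) ≠ ⊤ := measure_ne_top _ _
  have hIoi : (gaussianReal 0 1) (Set.Ioi x) ≠ ⊤ := measure_ne_top _ _
  have h4 : ((gaussianReal 0 1) (Set.Iic x)).toReal + ((gaussianReal 0 1) (Set.Ioi x)).toReal = 1 := by
    rw [← ENNReal.toReal_add hIic hIoi, h2]; simp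
  have h5 : ((gaussianReal 0 1) (Set.Ioi x)).toReal = ∫ y in Set.Ioi x, gaussianPDFReal 0 1 y := by
    rw [h3, ENNReal.toReal_ofReal]
    exact integral_nonneg fun y => gaussianPDFReal_nonneg _ _ _
  rw [h1, ← h5]; linarith

open MeasureTheory Set in
lemma tail_lb {x : ℝ} (hx : 0 ≤ x) :
    (Real.sqrt (2 * π))⁻¹ * rexp (-(x + 1) ^ 2 / 2) ≤ 1 - stdNormalCDF x := by
  rw [tail_eq]
  have hint : IntegrableOn (gaussianPDFReal 0 1) (Set.Ioi x) volume :=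
    (integrable_gaussianPDFReal 0 1).integrableOn
  have hsub : Set.Ioc x (x + 1) ⊆ Set.Ioi x := Set.Ioc_subset_Ioi_self
  have step1 : ∫ y in Set.Ioc x (x+1), gaussianPDFReal 0 1 y
      ≤ ∫ y in Set.Ioi x, gaussianPDFReal 0 1 y :=
    setIntegral_mono_set hint (ae_of_all _ fun y => gaussianPDFReal_nonneg _ _ _)
      (ae_of_all _ hsub)
  refine le_trans ?_ step1
  have step2 : ∫ y in Set.Ioc x (x+1), (Real.sqrt (2 * π))⁻¹ * rexp (-(x + 1) ^ 2 / 2)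
      ≤ ∫ y in Set.Ioc x (x+1), gaussianPDFReal 0 1 y := by
    refine setIntegral_mono_on (integrableOn_const measure_Ioc_lt_top.ne)
      (hint.mono_set hsub) measurableSet_Ioc ?_
    intro y hy
    have hy1 : x < y := hy.1
    have hy2 : y ≤ x + 1 := hy.2
    simp only [gaussianPDFReal, NNReal.coe_one, mul_one, sub_zero]
    refine mul_le_mul_of_nonneg_left ?_ (by positivity)
    rw [Real.exp_le_exp]
    have : y ^ 2 ≤ (x + 1) ^ 2 := by nlinarith
    rw [neg_div, neg_div, neg_le_neg_iff]
    linarith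
  refine le_trans (le_of_eq ?_) step2
  rw [setIntegral_const]
  simp [Real.volume_Ioc]


lemma sqrt_tendsto_atTop : Filter.Tendsto Real.sqrt Filter.atTop Filter.atTop := by
  rw [Filter.tendsto_atTop_atTop]
  intro b
  refine ⟨b ^ 2, fun a ha => ?_⟩
  rcases le_or_gt b 0 with hb | hb
  · exact hb.trans (Real.sqrt_nonneg a)
  · calc b = Real.sqrt (b ^ 2) := (Real.sqrt_sq hb.le).symm
      _ ≤ Real.sqrt a := Real.sqrt_le_sqrt ha

lemma key_aux (σ_a σ_b μ_a μ_b ε u : ℝ) (hσa : σ_a ≠ 0) (hε : 0 < ε) (hu : 0 ≤ u) :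
    u - ((μ_b + σ_b * Real.sqrt (2 * (1 + ε) * u) - μ_a) / σ_a + 1) ^ 2 / 2
      = (1 - (1 + ε) * σ_b ^ 2 / σ_a ^ 2) * u
        - (Real.sqrt (2 * (1 + ε)) * (σ_b / σ_a) * ((μ_b - μ_a) / σ_a + 1)) * Real.sqrt u
        - ((μ_b - μ_a) / σ_a + 1) ^ 2 / 2 := by
  rw [Real.sqrt_mul (by positivity) u]
  obtain ⟨A, hA, hA2⟩ : ∃ A : ℝ, A = Real.sqrt (2 * (1 + ε)) ∧ A ^ 2 = 2 * (1 + ε) :=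
    ⟨_, rfl, Real.sq_sqrt (by positivity)⟩
  obtain ⟨B, hB, hB2⟩ : ∃ B : ℝ, B = Real.sqrt u ∧ B ^ 2 = u :=
    ⟨_, rfl, Real.sq_sqrt hu⟩
  rw [← hA, ← hB, ← hB2, show (1 : ℝ) + ε = A ^ 2 / 2 by rw [hA2]; ring]
  field_simp
  ring

/-- For σ_a > σ_b > 0 and ε > 0 small enough that 1 - (1+ε)σ_b²/σ_a² > 0, with
t_N = μ_b + σ_b √(2(1+ε) log N) and z_{a,N} = (t_N - μ_a)/σ_a, we have
N p_a (1 - Φ(z_{a,N})) → ∞ and hence (1 - p_a (1 - Φ(z_{a,N})))^N → 0. -/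
theorem stmt18 (p_a σ_a σ_b μ_a μ_b ε : ℝ) (hp0 : 0 < p_a) (hp1 : p_a ≤ 1)
    (hσb : 0 < σ_b) (hσ : σ_b < σ_a) (hε : 0 < ε)
    (hεsmall : 0 < 1 - (1 + ε) * σ_b ^ 2 / σ_a ^ 2)
    (t : ℕ → ℝ) (ht : ∀ N : ℕ, t N = μ_b + σ_b * Real.sqrt (2 * (1 + ε) * Real.log N))
    (z : ℕ → ℝ) (hz : ∀ N : ℕ, z N = (t N - μ_a) / σ_a) :
    Tendsto (fun N : ℕ => (N : ℝ) * p_a * (1 - stdNormalCDF (z N))) atTop atTop ∧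
    Tendsto (fun N : ℕ => (1 - p_a * (1 - stdNormalCDF (z N))) ^ N) atTop (nhds 0) := by
  have hσa : 0 < σ_a := hσb.trans hσ
  have key : ∀ N : ℕ, 0 ≤ Real.log N →
      Real.log N - (z N + 1) ^ 2 / 2
        = (1 - (1 + ε) * σ_b ^ 2 / σ_a ^ 2) * Real.log N
          - (Real.sqrt (2 * (1 + ε)) * (σ_b / σ_a) * ((μ_b - μ_a) / σ_a + 1))
            * Real.sqrt (Real.log N)
          - ((μ_b - μ_a) / σ_a + 1) ^ 2 / 2 := by
    intro N hN
    rw [hz, ht]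
    exact key_aux σ_a σ_b μ_a μ_b ε (Real.log N) hσa.ne' hε hN
  set c : ℝ := (1 + ε) * σ_b ^ 2 / σ_a ^ 2 with hcdef
  set d : ℝ := (μ_b - μ_a) / σ_a + 1 with hddef
  set K : ℝ := Real.sqrt (2 * (1 + ε)) * (σ_b / σ_a) * d with hKdef
  have h1c : 0 < 1 - c := hεsmall
  have hlog : Tendsto (fun N : ℕ => Real.log N) atTop atTop :=
    Real.tendsto_log_atTop.comp tendsto_natCast_atTop_atTop
  -- exponent tends to atTop
  have hT : Tendsto (fun u : ℝ => (1 - c) * u - K * Real.sqrt u - d ^ 2 / 2) atTop atTop := by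
    have hfac : Tendsto (fun u : ℝ => Real.sqrt u * ((1 - c) * Real.sqrt u - K))
        atTop atTop := by
      refine Tendsto.atTop_mul_atTop₀ sqrt_tendsto_atTop ?_
      have := sqrt_tendsto_atTop.const_mul_atTop h1c
      simpa [sub_eq_add_neg] using tendsto_atTop_add_const_right atTop (-K) this
    have hcongr : Tendsto (fun u : ℝ => (1 - c) * u - K * Real.sqrt u) atTop atTop := by
      refine hfac.congr' ?_
      filter_upwards [eventually_ge_atTop (0:ℝ)] with u hu
      have : Real.sqrt u * Real.sqrt u = u := Real.mul_self_sqrt hu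
      nlinarith [this]
    simpa [sub_eq_add_neg] using tendsto_atTop_add_const_right atTop (-(d ^ 2 / 2)) hcongr
  have hE : Tendsto (fun N : ℕ =>
      (1 - c) * Real.log N - K * Real.sqrt (Real.log N) - d ^ 2 / 2) atTop atTop :=
    hT.comp hlog
  have hg : Tendsto (fun N : ℕ => p_a * (Real.sqrt (2 * π))⁻¹ *
      rexp ((1 - c) * Real.log N - K * Real.sqrt (Real.log N) - d ^ 2 / 2)) atTop atTop := by
    refine Tendsto.const_mul_atTop (by positivity) (Real.tendsto_exp_atTop.comp hE)
  -- z tends to atTop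
  have hsq : Tendsto (fun N : ℕ => Real.sqrt (2 * (1 + ε) * Real.log N)) atTop atTop :=
    sqrt_tendsto_atTop.comp (hlog.const_mul_atTop (by positivity))
  have hzt : Tendsto z atTop atTop := by
    have : Tendsto (fun N : ℕ =>
        (μ_b + σ_b * Real.sqrt (2 * (1 + ε) * Real.log N) - μ_a) / σ_a) atTop atTop := by
      refine Tendsto.atTop_div_const hσa ?_
      have h' := hsq.const_mul_atTop hσb
      have := tendsto_atTop_add_const_left atTop μ_b h'
      simpa [sub_eq_add_neg, add_assoc] using tendsto_atTop_add_const_right atTop (-μ_a) this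
    refine this.congr fun N => by rw [hz, ht]
  -- part 1
  have part1 : Tendsto (fun N : ℕ => (N : ℝ) * p_a * (1 - stdNormalCDF (z N))) atTop atTop := by
    refine tendsto_atTop_mono' atTop ?_ hg
    filter_upwards [hzt.eventually_ge_atTop 0, eventually_ge_atTop 1,
      hlog.eventually_ge_atTop 0] with N hzN hN1 hlogN
    have hNpos : (0:ℝ) < N := by exact_mod_cast hN1
    calc p_a * (Real.sqrt (2 * π))⁻¹ *
        rexp ((1 - c) * Real.log N - K * Real.sqrt (Real.log N) - d ^ 2 / 2)
        = (N * p_a) * ((Real.sqrt (2 * π))⁻¹ * rexp (-(z N + 1) ^ 2 / 2)) := by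
          rw [← key N hlogN,
            show Real.log N - (z N + 1) ^ 2 / 2
              = Real.log N + (-(z N + 1) ^ 2 / 2) by ring,
            Real.exp_add, Real.exp_log hNpos]
          ring
      _ ≤ (N * p_a) * (1 - stdNormalCDF (z N)) :=
          mul_le_mul_of_nonneg_left (tail_lb hzN) (by positivity)
      _ = (N : ℝ) * p_a * (1 - stdNormalCDF (z N)) := by ring
  refine ⟨part1, ?_⟩
  -- part 2
  have hq0 : ∀ N, 0 ≤ p_a * (1 - stdNormalCDF (z N)) := fun N =>
    mul_nonneg hp0.le (by simpa [stdNormalCDF] using cdf_le_one (gaussianReal 0 1) (z N))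
  have hq1 : ∀ N, p_a * (1 - stdNormalCDF (z N)) ≤ 1 := by
    intro N
    have h0 : 0 ≤ stdNormalCDF (z N) := cdf_nonneg _ _
    have h1 : 1 - stdNormalCDF (z N) ≤ 1 := by linarith
    calc p_a * (1 - stdNormalCDF (z N)) ≤ 1 * 1 :=
      mul_le_mul hp1 h1 (by simpa [stdNormalCDF] using cdf_le_one (gaussianReal 0 1) (z N)) zero_le_one
    _ = 1 := by ring
  refine squeeze_zero (g := fun N : ℕ => rexp (-((N : ℝ) * p_a * (1 - stdNormalCDF (z N)))))
    (fun N => pow_nonneg (by linarith [hq1 N]) N) (fun N => ?_) ?_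
  · have hle : 1 - p_a * (1 - stdNormalCDF (z N)) ≤ rexp (-(p_a * (1 - stdNormalCDF (z N)))) := by
      have := Real.add_one_le_exp (-(p_a * (1 - stdNormalCDF (z N))))
      linarith
    calc (1 - p_a * (1 - stdNormalCDF (z N))) ^ N
        ≤ (rexp (-(p_a * (1 - stdNormalCDF (z N))))) ^ N :=
          pow_le_pow_left₀ (by linarith [hq1 N]) hle N
      _ = rexp (-((N : ℝ) * p_a * (1 - stdNormalCDF (z N)))) := by
          rw [← Real.exp_nat_mul]; ring_nf
  · exact Real.tendsto_exp_neg_atTop_nhds_zero.comp part1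
end

section
/- In max-score aggregation with i.i.d. K-category draws (Pr = p_k, all p_k > 0) and Gaussian scores N(μ_k, σ_k²): if σ_a > σ_b for two categories a ≠ b, then Pr(M̃_a^(N) ≤ M̃_b^(N)) → 0 as N → ∞. -/
open MeasureTheory ProbabilityTheory Real Finset Filter Classical

/-- Index family for joint independence of the category draws (left) and the Gaussian
scores (right), for an infinite sequence of samples. -/
def mixTypeSeq (K : ℕ) : ℕ ⊕ (Fin K × ℕ) → Type :=
  fun i => Sum.elim (fun _ => Fin K) (fun _ => ℝ) i

noncomputable instance (K : ℕ) (i : ℕ ⊕ (Fin K × ℕ)) :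
    MeasurableSpace (mixTypeSeq K i) := by
  cases i with
  | inl _ => exact inferInstanceAs (MeasurableSpace (Fin K))
  | inr _ => exact inferInstanceAs (MeasurableSpace ℝ)

open scoped ENNReal NNReal

def mySets (K : ℕ) (k : Fin K) (t : ℝ) : ∀ i, Set (mixTypeSeq K i) :=
  fun i => Sum.rec (motive := fun i => Set (mixTypeSeq K i))
    (fun _ => ({k} : Set (Fin K))) (fun _ => (Set.Ioi t : Set ℝ)) i

-- upper tail bound
lemma my_gauss_tail_le (m : ℝ) (v : ℝ≥0) (hv : v ≠ 0) {s : ℝ} (hs : (v:ℝ) ≤ s) (hs0 : 0 < s) :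
    (gaussianReal m v (Set.Ioi (m + s))).toReal
      ≤ (Real.sqrt (2 * π * v))⁻¹ * Real.exp (-s^2 / (2 * v)) := by
  have hvpos : (0:ℝ) < v := by positivity
  rw [gaussianReal_apply_eq_integral m hv]
  rw [ENNReal.toReal_ofReal (integral_nonneg fun x => gaussianPDFReal_nonneg m v x)]
  set t := m + s with ht
  set c := (Real.sqrt (2 * π * v))⁻¹ * Real.exp (-s^2 / (2 * v)) with hc
  have hcpos : 0 < c := by positivity
  have key : ∀ x ∈ Set.Ioi t, gaussianPDFReal m v x ≤ c * Real.exp (-(x - t)) := by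
    intro x hx
    rw [gaussianPDFReal, hc]
    have hxt : t ≤ x := le_of_lt hx
    have hsq : -(x - m)^2 ≤ -s^2 - 2*v*(x-t) := by
      have hxm : x - m = s + (x - t) := by rw [ht]; ring
      nlinarith [sq_nonneg (x - t), mul_le_mul_of_nonneg_right hs (sub_nonneg.2 hxt)]
    have hexp : Real.exp (-(x - m)^2/(2*(v:ℝ))) ≤ Real.exp (-s^2/(2*(v:ℝ))) * Real.exp (-(x-t)) := by
      rw [← Real.exp_add]
      apply Real.exp_le_exp.2
      calc -(x-m)^2/(2*(v:ℝ)) ≤ (-s^2 - 2*(v:ℝ)*(x-t))/(2*(v:ℝ)) := by gcongr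
        _ = -s^2/(2*(v:ℝ)) + -(x-t) := by field_simp; ring
    calc (Real.sqrt (2 * π * (v:ℝ)))⁻¹ * Real.exp (-(x - m)^2/(2*(v:ℝ)))
        ≤ (Real.sqrt (2 * π * (v:ℝ)))⁻¹ * (Real.exp (-s^2/(2*(v:ℝ))) * Real.exp (-(x-t))) :=
          mul_le_mul_of_nonneg_left hexp (by positivity)
      _ = (Real.sqrt (2 * π * (v:ℝ)))⁻¹ * Real.exp (-s^2/(2*(v:ℝ))) * Real.exp (-(x-t)) := by ring
  have hint : IntegrableOn (fun x => c * Real.exp (-(x - t))) (Set.Ioi t) := by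
    have := (exp_neg_integrableOn_Ioi t (by norm_num : (0:ℝ) < 1))
    simp only [neg_mul, one_mul] at this
    have h2 : IntegrableOn (fun x : ℝ => Real.exp (-(x - t))) (Set.Ioi t) := by
      have : (fun x : ℝ => Real.exp (-(x - t))) = fun x => Real.exp t * Real.exp (-x) := by
        funext x; rw [← Real.exp_add]; ring_nf
      rw [this]
      exact (exp_neg_integrableOn_Ioi t one_pos).congr_fun (by intro x _; simp [one_mul]) measurableSet_Ioi |>.const_mul _
    exact h2.const_mul c
  have hmono : ∫ x in Set.Ioi t, gaussianPDFReal m v x ≤ ∫ x in Set.Ioi t, c * Real.exp (-(x - t)) := by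
    apply setIntegral_mono_on (integrable_gaussianPDFReal m v).restrict hint measurableSet_Ioi key
  have hval : ∫ x in Set.Ioi t, c * Real.exp (-(x - t)) = c := by
    rw [integral_const_mul]
    have : ∀ x : ℝ, Real.exp (-(x - t)) = Real.exp t * Real.exp (-x) := by
      intro x; rw [← Real.exp_add]; ring_nf
    rw [integral_congr_ae (ae_of_all _ fun x => this x), integral_const_mul, integral_exp_neg_Ioi,
      ← Real.exp_add]
    simp
  linarith

lemma my_gauss_tail_ge (m : ℝ) (v : ℝ≥0) (hv : v ≠ 0) {s : ℝ} (hs : 0 ≤ s) :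
    (Real.sqrt (2 * π * v))⁻¹ * Real.exp (-(s+1)^2 / (2 * v))
      ≤ (gaussianReal m v (Set.Ioi (m + s))).toReal := by
  have hvpos : (0:ℝ) < v := by positivity
  rw [gaussianReal_apply_eq_integral m hv]
  rw [ENNReal.toReal_ofReal (integral_nonneg fun x => gaussianPDFReal_nonneg m v x)]
  set t := m + s with ht
  set c := (Real.sqrt (2 * π * v))⁻¹ * Real.exp (-(s+1)^2 / (2 * v)) with hc
  have h1 : ∫ x in Set.Ioc t (t+1), (c : ℝ) ≤ ∫ x in Set.Ioc t (t+1), gaussianPDFReal m v x := by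
    apply setIntegral_mono_on (integrableOn_const measure_Ioc_lt_top.ne)
      (integrable_gaussianPDFReal m v).restrict measurableSet_Ioc
    intro x hx
    rw [gaussianPDFReal, hc]
    apply mul_le_mul_of_nonneg_left _ (by positivity)
    apply Real.exp_le_exp.2
    apply div_le_div_of_nonneg_right _ (by positivity)
    have hx1 : t < x := hx.1
    have hx2 : x ≤ t + 1 := hx.2
    nlinarith [ht]
  have h2 : ∫ x in Set.Ioc t (t+1), (c : ℝ) = c := by
    rw [setIntegral_const, Real.volume_real_Ioc]
    simp
  have h3 : ∫ x in Set.Ioc t (t+1), gaussianPDFReal m v x ≤ ∫ x in Set.Ioi t, gaussianPDFReal m v x := by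
    apply setIntegral_mono_set (integrable_gaussianPDFReal m v).restrict
      (ae_of_all _ fun x => gaussianPDFReal_nonneg m v x)
      (HasSubset.Subset.eventuallyLE Set.Ioc_subset_Ioi_self)
  linarith

lemma my_prodB {Ω : Type*} [MeasurableSpace Ω] (P : Measure Ω) [IsProbabilityMeasure P]
    (K : ℕ) (p μ σ : Fin K → ℝ)
    (C : ℕ → Ω → Fin K) (hCmeas : ∀ u, Measurable (C u))
    (S : Fin K → ℕ → Ω → ℝ) (hSmeas : ∀ k u, Measurable (S k u))
    (hdist : ∀ (u : ℕ) (k : Fin K), P {ω : Ω | C u ω = k} = ENNReal.ofReal (p k))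
    (hgauss : ∀ (k : Fin K) (u : ℕ),
      Measure.map (S k u) P = gaussianReal (μ k) ((σ k ^ 2).toNNReal))
    (hindep : iIndepFun
      (fun i : ℕ ⊕ (Fin K × ℕ) =>
        Sum.rec (motive := fun i => Ω → mixTypeSeq K i)
          (fun u => C u) (fun ku => S ku.1 ku.2) i) P)
    (k : Fin K) (t : ℝ) (s : Finset ℕ) :
    P (⋂ u ∈ s, ({ω : Ω | C u ω = k} ∩ {ω : Ω | t < S k u ω}))
      = ∏ _u ∈ s, (ENNReal.ofReal (p k) * gaussianReal (μ k) ((σ k ^ 2).toNNReal) (Set.Ioi t)) := by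
  classical
  set J : Finset (ℕ ⊕ (Fin K × ℕ)) :=
    s.image Sum.inl ∪ s.image (fun u => Sum.inr (k, u)) with hJ
  have hmeas : ∀ i, i ∈ J → MeasurableSet[inferInstance] (mySets K k t i) := by
    intro i _
    cases i with
    | inl u => exact measurableSet_singleton k
    | inr ku => exact (measurableSet_Ioi : MeasurableSet (Set.Ioi t))
  have hkey := hindep.measure_inter_preimage_eq_mul (sets := mySets K k t) J hmeas
  have hInter : (⋂ i ∈ J, (Sum.rec (motive := fun i => Ω → mixTypeSeq K i)
          (fun u => C u) (fun ku => S ku.1 ku.2) i) ⁻¹' mySets K k t i)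
      = ⋂ u ∈ s, ({ω : Ω | C u ω = k} ∩ {ω : Ω | t < S k u ω}) := by
    ext ω
    simp only [Set.mem_iInter, Finset.mem_union, Finset.mem_image, hJ]
    constructor
    · intro h u hu
      exact ⟨h (Sum.inl u) (Or.inl ⟨u, hu, rfl⟩), h (Sum.inr (k, u)) (Or.inr ⟨u, hu, rfl⟩)⟩
    · rintro h i (⟨u, hu, rfl⟩ | ⟨u, hu, rfl⟩)
      · exact (h u hu).1
      · exact (h u hu).2
  have hdisj : Disjoint (s.image Sum.inl) (s.image (fun u => Sum.inr (k, u))) := by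
    simp [Finset.disjoint_left]
  have hprod : ∏ i ∈ J, P ((Sum.rec (motive := fun i => Ω → mixTypeSeq K i)
          (fun u => C u) (fun ku => S ku.1 ku.2) i) ⁻¹' mySets K k t i)
      = ∏ u ∈ s, (ENNReal.ofReal (p k) * gaussianReal (μ k) ((σ k ^ 2).toNNReal) (Set.Ioi t)) := by
    rw [hJ, Finset.prod_union hdisj,
      Finset.prod_image (fun x _ y _ h => Sum.inl_injective h),
      Finset.prod_image (fun x _ y _ h => by simpa using h),
      ← Finset.prod_mul_distrib]
    apply Finset.prod_congr rfl
    intro u _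
    have h1 : P (C u ⁻¹' ({k} : Set (Fin K))) = ENNReal.ofReal (p k) := by
      rw [← hdist u k]; rfl
    have h2 : P (S k u ⁻¹' Set.Ioi t) = gaussianReal (μ k) ((σ k ^ 2).toNNReal) (Set.Ioi t) := by
      rw [← hgauss k u, Measure.map_apply (hSmeas k u) measurableSet_Ioi]
    exact congrArg₂ (· * ·) h1 h2
  rw [← hInter, hkey, hprod]

lemma my_compl_prod {Ω : Type*} [MeasurableSpace Ω] (P : Measure Ω) [IsProbabilityMeasure P]
    (K : ℕ) (p μ σ : Fin K → ℝ)
    (C : ℕ → Ω → Fin K) (hCmeas : ∀ u, Measurable (C u))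
    (S : Fin K → ℕ → Ω → ℝ) (hSmeas : ∀ k u, Measurable (S k u))
    (hdist : ∀ (u : ℕ) (k : Fin K), P {ω : Ω | C u ω = k} = ENNReal.ofReal (p k))
    (hgauss : ∀ (k : Fin K) (u : ℕ),
      Measure.map (S k u) P = gaussianReal (μ k) ((σ k ^ 2).toNNReal))
    (hindep : iIndepFun
      (fun i : ℕ ⊕ (Fin K × ℕ) =>
        Sum.rec (motive := fun i => Ω → mixTypeSeq K i)
          (fun u => C u) (fun ku => S ku.1 ku.2) i) P)
    (k : Fin K) (t : ℝ) (N : ℕ) :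
    P (⋂ u ∈ Finset.range N, ({ω : Ω | C u ω = k} ∩ {ω : Ω | t < S k u ω})ᶜ)
      = (1 - ENNReal.ofReal (p k) * gaussianReal (μ k) ((σ k ^ 2).toNNReal) (Set.Ioi t)) ^ N := by
  classical
  set B : ℕ → Set Ω := fun u => {ω : Ω | C u ω = k} ∩ {ω : Ω | t < S k u ω} with hB
  set r : ℝ≥0∞ := ENNReal.ofReal (p k) * gaussianReal (μ k) ((σ k ^ 2).toNNReal) (Set.Ioi t)
    with hr
  have hBmeas : ∀ u, MeasurableSet (B u) := fun u =>
    ((hCmeas u) (measurableSet_singleton k)).inter ((hSmeas k u) measurableSet_Ioi)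
  have hsingle : ∀ u, P (B u) = r := by
    intro u
    have := my_prodB P K p μ σ C hCmeas S hSmeas hdist hgauss hindep k t {u}
    simpa using this
  have hsets : iIndepSets (fun u => ({B u} : Set (Set Ω))) P := by
    rw [iIndepSets_iff]
    intro s f hf
    have he : (⋂ u ∈ s, f u) = ⋂ u ∈ s, B u := by
      apply Set.iInter_congr; intro u
      by_cases hu : u ∈ s
      · simp [hu, Set.eq_of_mem_singleton (hf u hu)]
      · simp [hu]
    rw [he, my_prodB P K p μ σ C hCmeas S hSmeas hdist hgauss hindep k t s]
    apply Finset.prod_congr rfl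
    intro u hu
    rw [Set.eq_of_mem_singleton (hf u hu), hsingle u]
  have hle : ∀ u : ℕ, MeasurableSpace.generateFrom ({B u} : Set (Set Ω)) ≤ ‹MeasurableSpace Ω› := by
    intro u
    apply MeasurableSpace.generateFrom_le
    intro s hs
    rw [Set.mem_singleton_iff] at hs
    subst hs
    exact hBmeas u
  have hiIndep : iIndep (fun u => MeasurableSpace.generateFrom ({B u} : Set (Set Ω))) P :=
    iIndepSets.iIndep hle (fun u => {B u}) (fun u => IsPiSystem.singleton (B u))
      (fun u => rfl) hsets
  have hfinal := hiIndep.meas_biInter (S := Finset.range N) (s := fun u => (B u)ᶜ)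
    (fun u _ => (MeasurableSpace.measurableSet_generateFrom (Set.mem_singleton (B u))).compl)
  rw [hfinal]
  have : ∀ u ∈ Finset.range N, P ((B u)ᶜ) = 1 - r := by
    intro u _
    rw [measure_compl (hBmeas u) (measure_ne_top P _), hsingle u, measure_univ]
  rw [Finset.prod_congr rfl this, Finset.prod_const, Finset.card_range]

lemma my_sqrt_atTop : Tendsto Real.sqrt atTop atTop := by
  apply tendsto_atTop_atTop.2
  intro b
  refine ⟨(max b 0)^2, fun x hx => ?_⟩
  have h := Real.sqrt_le_sqrt hx
  rw [Real.sqrt_sq (le_max_right b 0)] at h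
  exact (le_max_left b 0).trans h

lemma my_linear_sub_sqrt (A B : ℝ) (hA : 0 < A) (hB : 0 ≤ B) :
    Tendsto (fun x : ℝ => A * x - B * Real.sqrt x) atTop atTop := by
  refine tendsto_atTop_mono' atTop ?_ my_sqrt_atTop
  · filter_upwards [eventually_ge_atTop (((B+1)/A)^2), eventually_ge_atTop (0:ℝ)] with x hx hx0
    have hs0 : 0 ≤ Real.sqrt x := Real.sqrt_nonneg x
    have hss : Real.sqrt x * Real.sqrt x = x := Real.mul_self_sqrt hx0
    have hsge : (B+1)/A ≤ Real.sqrt x := by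
      have := Real.sqrt_le_sqrt hx
      rwa [Real.sqrt_sq (by positivity)] at this
    have h1 : B + 1 ≤ A * Real.sqrt x := by
      rw [div_le_iff₀ hA] at hsge; linarith
    nlinarith

lemma my_exp_comp_zero {γ : ℝ} (hγ : 0 < γ) (L : ℕ → ℝ) (hL : Tendsto L atTop atTop) :
    Tendsto (fun N => Real.exp (-γ * L N)) atTop (nhds 0) := by
  apply Real.tendsto_exp_atBot.comp
  exact hL.const_mul_atTop_of_neg (by linarith)
set_option maxHeartbeats 2000000

/-- In max-score aggregation with i.i.d. K-category draws (all p_k > 0) and Gaussian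
scores N(μ_k, σ_k²): if σ_a > σ_b for two categories a ≠ b, then
Pr(M̃_a^(N) ≤ M̃_b^(N)) → 0 as N → ∞, where M̃_k^(N) is the maximum Gaussian score among
the first N samples landing in category k (−∞ if there is none). -/
theorem stmt19 {Ω : Type*} [MeasurableSpace Ω] (P : Measure Ω) [IsProbabilityMeasure P]
    (K : ℕ) (p μ σ : Fin K → ℝ) (hp : ∀ k, 0 < p k) (hsum : ∑ k, p k = 1)
    (hσpos : ∀ k, 0 < σ k)
    (C : ℕ → Ω → Fin K) (hCmeas : ∀ u, Measurable (C u))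
    (S : Fin K → ℕ → Ω → ℝ) (hSmeas : ∀ k u, Measurable (S k u))
    (hdist : ∀ (u : ℕ) (k : Fin K), P {ω : Ω | C u ω = k} = ENNReal.ofReal (p k))
    (hgauss : ∀ (k : Fin K) (u : ℕ),
      Measure.map (S k u) P = gaussianReal (μ k) ((σ k ^ 2).toNNReal))
    (hindep : iIndepFun
      (fun i : ℕ ⊕ (Fin K × ℕ) =>
        Sum.rec (motive := fun i => Ω → mixTypeSeq K i)
          (fun u => C u) (fun ku => S ku.1 ku.2) i) P)
    (a b : Fin K) (hab : a ≠ b) (hσ : σ b < σ a) :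
    Tendsto (fun N : ℕ =>
        P {ω : Ω | ((Finset.range N).filter (fun u => C u ω = a)).sup
              (fun u => ((S a u ω : ℝ) : WithBot ℝ))
            ≤ ((Finset.range N).filter (fun u => C u ω = b)).sup
              (fun u => ((S b u ω : ℝ) : WithBot ℝ))})
      atTop (nhds 0) := by
  classical
  -- variances
  have hva : ((σ a ^ 2).toNNReal : ℝ) = σ a ^ 2 := Real.coe_toNNReal _ (sq_nonneg _)
  have hvb : ((σ b ^ 2).toNNReal : ℝ) = σ b ^ 2 := Real.coe_toNNReal _ (sq_nonneg _)
  set va : ℝ := σ a ^ 2 with hvadef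
  set vb : ℝ := σ b ^ 2 with hvbdef
  have hvapos : (0:ℝ) < va := by rw [hvadef]; exact pow_pos (hσpos a) 2
  have hvbpos : (0:ℝ) < vb := by rw [hvbdef]; exact pow_pos (hσpos b) 2
  have hvAne : (σ a ^ 2).toNNReal ≠ 0 := by
    simp only [ne_eq, Real.toNNReal_eq_zero, not_le]; exact pow_pos (hσpos a) 2
  have hvBne : (σ b ^ 2).toNNReal ≠ 0 := by
    simp only [ne_eq, Real.toNNReal_eq_zero, not_le]; exact pow_pos (hσpos b) 2
  have hvab : vb < va := by
    rw [hvadef, hvbdef]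
    nlinarith [hσpos b, hσpos a, hσ]
  -- real tails
  set τa : ℝ → ℝ := fun t => (gaussianReal (μ a) ((σ a ^ 2).toNNReal) (Set.Ioi t)).toReal
    with hτadef
  set τb : ℝ → ℝ := fun t => (gaussianReal (μ b) ((σ b ^ 2).toNNReal) (Set.Ioi t)).toReal
    with hτbdef
  have hτa0 : ∀ t, 0 ≤ τa t := fun t => ENNReal.toReal_nonneg
  have hτb0 : ∀ t, 0 ≤ τb t := fun t => ENNReal.toReal_nonneg
  -- sequences
  set L : ℕ → ℝ := fun N => Real.log N with hLdef
  set s0 : ℕ → ℝ := fun N => Real.sqrt ((va + vb) * L N) with hs0def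
  set tt : ℕ → ℝ := fun N => μ b + s0 N with httdef
  have hL : Tendsto L atTop atTop := Real.tendsto_log_atTop.comp tendsto_natCast_atTop_atTop
  have hs0T : Tendsto s0 atTop atTop :=
    my_sqrt_atTop.comp (hL.const_mul_atTop (by positivity))
  -- constants
  set β : ℝ := (va + vb) / (2 * va) with hβdef
  have hβ1 : β < 1 := by rw [hβdef, div_lt_one (by positivity)]; linarith
  have hβ0 : 0 < β := by rw [hβdef]; positivity
  set γ : ℝ := (va + vb) / (2 * vb) with hγdef
  have hγ1 : 1 < γ := by rw [hγdef, lt_div_iff₀ (by positivity)]; linarith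
  set mc : ℝ := μ b - μ a + 1 with hmcdef
  set M : ℝ := |mc| with hMdef
  have hM0 : 0 ≤ M := abs_nonneg mc
  set ca : ℝ := (Real.sqrt (2 * π * va))⁻¹ with hcadef
  set cb : ℝ := (Real.sqrt (2 * π * vb))⁻¹ with hcbdef
  have hca0 : 0 < ca := by rw [hcadef]; positivity
  have hcb0 : 0 < cb := by rw [hcbdef]; positivity
  set c0 : ℝ := M ^ 2 / (2 * va) with hc0def
  -- part (i): N * (p a * τa (tt N)) → ∞
  set g : ℕ → ℝ := fun N => p a * ca * Real.exp ((1 - β) * L N - (M / va) * s0 N - c0)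
    with hgdef
  have hg : Tendsto g atTop atTop := by
    rw [hgdef]
    apply Tendsto.const_mul_atTop (mul_pos (hp a) hca0)
    apply Real.tendsto_exp_atTop.comp
    have hin : Tendsto (fun x : ℝ => (1 - β) * x
        - ((M / va) * Real.sqrt (va + vb)) * Real.sqrt x - c0) atTop atTop :=
      tendsto_atTop_add_const_right _ (-c0)
        (my_linear_sub_sqrt (1 - β) ((M / va) * Real.sqrt (va + vb)) (by linarith)
          (by positivity)) |>.congr (fun x => by ring)
    have := hin.comp hL
    apply this.congr
    intro N
    simp only [Function.comp, hs0def]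
    rw [Real.sqrt_mul (by positivity) (L N)]
    ring
  have hx1 : Tendsto (fun N : ℕ => (N : ℝ) * (p a * τa (tt N))) atTop atTop := by
    apply tendsto_atTop_mono' atTop _ hg
    filter_upwards [eventually_ge_atTop 1, hL.eventually_ge_atTop 0,
      hs0T.eventually_ge_atTop (M + 1)] with N hN1 hL0 hs0M
    have hN0 : (0:ℝ) < N := by exact_mod_cast hN1
    have hs0nn : 0 ≤ s0 N := Real.sqrt_nonneg _
    have hmcM : -M ≤ mc ∧ mc ≤ M := abs_le.1 (le_refl M)
    have hd0 : 0 ≤ tt N - μ a := by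
      rw [httdef]
      simp only
      have : mc - 1 = μ b - μ a := by rw [hmcdef]; ring
      linarith [hmcM.1]
    have htail := my_gauss_tail_ge (μ a) ((σ a ^ 2).toNNReal) hvAne hd0
    rw [show μ a + (tt N - μ a) = tt N by ring] at htail
    rw [hva] at htail
    -- quadratic bound
    have hs0sq : s0 N ^ 2 = (va + vb) * L N := by
      rw [hs0def]; exact Real.sq_sqrt (by positivity)
    have hdm : tt N - μ a + 1 = s0 N + mc := by rw [httdef, hmcdef]; simp only; ring
    have hquad : (tt N - μ a + 1) ^ 2 ≤ (va + vb) * L N + 2 * M * s0 N + M ^ 2 := by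
      rw [hdm, ← hs0sq]
      have h1 : mc ≤ M := hmcM.2
      have h2 : mc ^ 2 ≤ M ^ 2 := by rw [hMdef, sq_abs]
      nlinarith
    have heq : -((va + vb) * L N + 2 * M * s0 N + M ^ 2) / (2 * va)
        = (1 - β) * L N - (M / va) * s0 N - c0 - L N := by
      rw [hβdef, hc0def]
      field_simp
      ring
    have hexpin : (1 - β) * L N - (M / va) * s0 N - c0 - L N
        ≤ -(tt N - μ a + 1) ^ 2 / (2 * va) := by
      rw [← heq]
      exact div_le_div_of_nonneg_right (neg_le_neg hquad) (by positivity)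
    -- combine
    have hNexp : (N : ℝ) = Real.exp (L N) := by
      rw [hLdef]; exact (Real.exp_log hN0).symm
    have step1 : (N : ℝ) * (p a * (ca * Real.exp (-(tt N - μ a + 1) ^ 2 / (2 * va))))
        ≤ (N : ℝ) * (p a * τa (tt N)) := by
      apply mul_le_mul_of_nonneg_left _ hN0.le
      apply mul_le_mul_of_nonneg_left _ (hp a).le
      exact htail
    have step2 : g N ≤ (N : ℝ)
        * (p a * (ca * Real.exp (-(tt N - μ a + 1) ^ 2 / (2 * va)))) := by
      rw [hgdef]
      simp only
      rw [hNexp]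
      have : Real.exp (L N) * (p a * (ca * Real.exp (-(tt N - μ a + 1) ^ 2 / (2 * va))))
          = p a * ca * Real.exp (L N + -(tt N - μ a + 1) ^ 2 / (2 * va)) := by
        rw [Real.exp_add]; ring
      rw [this]
      apply mul_le_mul_of_nonneg_left _ (mul_pos (hp a) hca0).le
      apply Real.exp_le_exp.2
      linarith
    linarith
  -- part (ii): N * (p b * τb (tt N)) → 0
  have hx2 : Tendsto (fun N : ℕ => (N : ℝ) * (p b * τb (tt N))) atTop (nhds 0) := by
    have hzero : Tendsto (fun N : ℕ => (p b * cb) * Real.exp (-(γ - 1) * L N)) atTop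
        (nhds 0) := by
      have := (my_exp_comp_zero (by linarith : (0:ℝ) < γ - 1) L hL).const_mul (p b * cb)
      simpa using this
    apply squeeze_zero' (g := fun N : ℕ => (p b * cb) * Real.exp (-(γ - 1) * L N))
      (Eventually.of_forall fun N => mul_nonneg (Nat.cast_nonneg N) (mul_nonneg (hp b).le (hτb0 _)))
    · filter_upwards [eventually_ge_atTop 1, hL.eventually_ge_atTop 0,
        hs0T.eventually_ge_atTop (max vb 1)] with N hN1 hL0 hs0M
      have hN0 : (0:ℝ) < N := by exact_mod_cast hN1
      have hs01 : (1:ℝ) ≤ s0 N := le_trans (le_max_right vb 1) hs0M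
      have htail := my_gauss_tail_le (μ b) ((σ b ^ 2).toNNReal) hvBne
        (s := s0 N) (by rw [hvb]; exact le_trans (le_max_left vb 1) hs0M) (by linarith)
      rw [hvb] at htail
      have htt : μ b + s0 N = tt N := by rw [httdef]
      rw [htt] at htail
      have hs0sq : s0 N ^ 2 = (va + vb) * L N := by
        rw [hs0def]; exact Real.sq_sqrt (by positivity)
      have hexpeq : -s0 N ^ 2 / (2 * vb) = -γ * L N := by
        rw [hs0sq, hγdef]; field_simp
      rw [hexpeq] at htail
      have hNexp : (N : ℝ) = Real.exp (L N) := by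
        rw [hLdef]; exact (Real.exp_log hN0).symm
      calc (N : ℝ) * (p b * τb (tt N))
          ≤ (N : ℝ) * (p b * (cb * Real.exp (-γ * L N))) := by
            apply mul_le_mul_of_nonneg_left _ hN0.le
            exact mul_le_mul_of_nonneg_left htail (hp b).le
        _ = p b * cb * (Real.exp (L N) * Real.exp (-γ * L N)) := by
            rw [hNexp]; ring
        _ = (p b * cb) * Real.exp (-(γ - 1) * L N) := by
            rw [← Real.exp_add, show L N + -γ * L N = -(γ - 1) * L N by ring]
    · exact hzero
  -- the measure bound
  have hbound : ∀ᶠ N : ℕ in atTop,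
      P {ω : Ω | ((Finset.range N).filter (fun u => C u ω = a)).sup
              (fun u => ((S a u ω : ℝ) : WithBot ℝ))
            ≤ ((Finset.range N).filter (fun u => C u ω = b)).sup
              (fun u => ((S b u ω : ℝ) : WithBot ℝ))}
        ≤ ENNReal.ofReal (Real.exp (-((N : ℝ) * (p a * τa (tt N)))))
          + ENNReal.ofReal ((N : ℝ) * (p b * τb (tt N))) := by
    apply Eventually.of_forall
    intro N
    set t : ℝ := tt N with htdef
    have hsub : {ω : Ω | ((Finset.range N).filter (fun u => C u ω = a)).sup
              (fun u => ((S a u ω : ℝ) : WithBot ℝ))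
            ≤ ((Finset.range N).filter (fun u => C u ω = b)).sup
              (fun u => ((S b u ω : ℝ) : WithBot ℝ))}
        ⊆ (⋂ u ∈ Finset.range N, ({ω : Ω | C u ω = a} ∩ {ω : Ω | t < S a u ω})ᶜ)
          ∪ (⋃ u ∈ Finset.range N, ({ω : Ω | C u ω = b} ∩ {ω : Ω | t < S b u ω})) := by
      intro ω hω
      rw [Set.mem_setOf_eq] at hω
      by_cases hMb : ((Finset.range N).filter (fun u => C u ω = b)).sup
          (fun u => ((S b u ω : ℝ) : WithBot ℝ)) ≤ (t : WithBot ℝ)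
      · left
        simp only [Set.mem_iInter, Set.mem_compl_iff, Set.mem_inter_iff, Set.mem_setOf_eq,
          not_and, not_lt]
        intro u hu hCu
        have hus : u ∈ (Finset.range N).filter (fun u => C u ω = a) :=
          Finset.mem_filter.2 ⟨hu, hCu⟩
        have h1 : ((S a u ω : ℝ) : WithBot ℝ) ≤ (t : WithBot ℝ) :=
          le_trans (Finset.le_sup (f := fun u => ((S a u ω : ℝ) : WithBot ℝ)) hus)
            (le_trans hω hMb)
        exact_mod_cast h1
      · right
        rw [Finset.sup_le_iff] at hMb
        push_neg at hMb
        obtain ⟨u, hu, hgt⟩ := hMb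
        rw [Finset.mem_filter] at hu
        refine Set.mem_iUnion₂.2 ⟨u, hu.1, hu.2, ?_⟩
        exact_mod_cast hgt
    have hP1 : P (⋂ u ∈ Finset.range N, ({ω : Ω | C u ω = a} ∩ {ω : Ω | t < S a u ω})ᶜ)
        = (1 - ENNReal.ofReal (p a)
            * gaussianReal (μ a) ((σ a ^ 2).toNNReal) (Set.Ioi t)) ^ N :=
      my_compl_prod P K p μ σ C hCmeas S hSmeas hdist hgauss hindep a t N
    have hP2 : P (⋃ u ∈ Finset.range N, ({ω : Ω | C u ω = b} ∩ {ω : Ω | t < S b u ω}))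
        ≤ (N : ℝ≥0∞) * (ENNReal.ofReal (p b)
            * gaussianReal (μ b) ((σ b ^ 2).toNNReal) (Set.Ioi t)) := by
      refine le_trans (measure_biUnion_finset_le _ _) ?_
      have heach : ∀ u ∈ Finset.range N,
          P ({ω : Ω | C u ω = b} ∩ {ω : Ω | t < S b u ω})
            = ENNReal.ofReal (p b) * gaussianReal (μ b) ((σ b ^ 2).toNNReal) (Set.Ioi t) := by
        intro u _
        have := my_prodB P K p μ σ C hCmeas S hSmeas hdist hgauss hindep b t {u}
        simpa using this
      rw [Finset.sum_congr rfl heach, Finset.sum_const, Finset.card_range, nsmul_eq_mul]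
    -- convert to ofReal
    have hra : ENNReal.ofReal (p a) * gaussianReal (μ a) ((σ a ^ 2).toNNReal) (Set.Ioi t)
        = ENNReal.ofReal (p a * τa t) := by
      rw [ENNReal.ofReal_mul (hp a).le, hτadef]
      congr 1
      exact (ENNReal.ofReal_toReal (measure_ne_top _ _)).symm
    have hrb : ENNReal.ofReal (p b) * gaussianReal (μ b) ((σ b ^ 2).toNNReal) (Set.Ioi t)
        = ENNReal.ofReal (p b * τb t) := by
      rw [ENNReal.ofReal_mul (hp b).le, hτbdef]
      congr 1
      exact (ENNReal.ofReal_toReal (measure_ne_top _ _)).symm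
    have h1 : (1 - ENNReal.ofReal (p a * τa t)) ^ N
        ≤ ENNReal.ofReal (Real.exp (-((N : ℝ) * (p a * τa t)))) := by
      have hbase : (1:ℝ≥0∞) - ENNReal.ofReal (p a * τa t)
          ≤ ENNReal.ofReal (Real.exp (-(p a * τa t))) := by
        rw [← ENNReal.ofReal_one, ← ENNReal.ofReal_sub 1 (mul_nonneg (hp a).le (hτa0 t))]
        apply ENNReal.ofReal_le_ofReal
        linarith [Real.add_one_le_exp (-(p a * τa t))]
      calc (1 - ENNReal.ofReal (p a * τa t)) ^ N
          ≤ ENNReal.ofReal (Real.exp (-(p a * τa t))) ^ N := pow_le_pow_left₀ zero_le hbase N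
        _ = ENNReal.ofReal (Real.exp (-(p a * τa t)) ^ N) :=
            (ENNReal.ofReal_pow (Real.exp_nonneg _) N).symm
        _ = ENNReal.ofReal (Real.exp (-((N : ℝ) * (p a * τa t)))) := by
            rw [← Real.exp_nat_mul]
            congr 1
            ring
    have h2 : (N : ℝ≥0∞) * ENNReal.ofReal (p b * τb t)
        = ENNReal.ofReal ((N : ℝ) * (p b * τb t)) := by
      rw [ENNReal.ofReal_mul (Nat.cast_nonneg N), ENNReal.ofReal_natCast]
    calc P _ ≤ P ((⋂ u ∈ Finset.range N, ({ω : Ω | C u ω = a} ∩ {ω : Ω | t < S a u ω})ᶜ)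
          ∪ (⋃ u ∈ Finset.range N, ({ω : Ω | C u ω = b} ∩ {ω : Ω | t < S b u ω}))) :=
          measure_mono hsub
      _ ≤ P (⋂ u ∈ Finset.range N, ({ω : Ω | C u ω = a} ∩ {ω : Ω | t < S a u ω})ᶜ)
          + P (⋃ u ∈ Finset.range N, ({ω : Ω | C u ω = b} ∩ {ω : Ω | t < S b u ω})) :=
          measure_union_le _ _
      _ ≤ ENNReal.ofReal (Real.exp (-((N : ℝ) * (p a * τa t))))
          + ENNReal.ofReal ((N : ℝ) * (p b * τb t)) := by
          apply add_le_add
          · rw [hP1, hra]; exact h1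
          · rw [← h2, ← hrb]; exact hP2
  -- final squeeze
  have hb1 : Tendsto (fun N : ℕ => ENNReal.ofReal
      (Real.exp (-((N : ℝ) * (p a * τa (tt N)))))) atTop (nhds 0) := by
    have : Tendsto (fun N : ℕ => Real.exp (-((N : ℝ) * (p a * τa (tt N))))) atTop (nhds 0) :=
      Real.tendsto_exp_atBot.comp (tendsto_neg_atTop_atBot.comp hx1)
    simpa using ENNReal.tendsto_ofReal this
  have hb2 : Tendsto (fun N : ℕ => ENNReal.ofReal
      ((N : ℝ) * (p b * τb (tt N)))) atTop (nhds 0) := by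
    simpa using ENNReal.tendsto_ofReal hx2
  have hsumT : Tendsto (fun N : ℕ => ENNReal.ofReal (Real.exp (-((N : ℝ) * (p a * τa (tt N)))))
      + ENNReal.ofReal ((N : ℝ) * (p b * τb (tt N)))) atTop (nhds 0) := by
    have := hb1.add hb2
    simpa using this
  exact tendsto_of_tendsto_of_tendsto_of_le_of_le' tendsto_const_nhds hsumT
    (Eventually.of_forall fun N => zero_le) hbound
end
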